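/- arXiv:2405.01343 — 3 statements merged into one kernel-verified Lean document; each statement's English description precedes it below -/
import Mathlib

section
/- Suppose P is strong Feller, i.e. P f is continuous on M for every bounded measurable f : M → ℝ. Then for every integer n ≥ 2 the induced operator P^n : L^∞(M,μ) → L^∞(M,μ) is compact (the image of the unit ball of L^∞(M,μ) under P^n is relatively compact in the essential-supremum norm). -/
open MeasureTheory ProbabilityTheory Filter Topology

namespace QEM

open scoped ENNReal NNReal BoundedContinuousFunction

noncomputable section

variable {M : Type*} [MetricSpace M] [CompactSpace M] [MeasurableSpace M] [BorelSpace M]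

/-- The weighted Koopman operator on real-valued functions:
`P f (x) = e^{φ(x)} ∫ f(y) κ(x,dy)`. -/
def PR (φ : M → ℝ) (κ : Kernel M M) (f : M → ℝ) : M → ℝ :=
  fun x => Real.exp (φ x) * ∫ y, f y ∂(κ x)

/-- The weighted Koopman operator on complex-valued functions
(`P f := P(Re f) + i P(Im f)`, equivalently with the complex Bochner integral). -/
def PC (φ : M → ℝ) (κ : Kernel M M) (f : M → ℂ) : M → ℂ :=
  fun x => (Real.exp (φ x) : ℂ) * ∫ y, f y ∂(κ x)

/-- Bounded measurable real-valued functions. -/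
def BddMeas (f : M → ℝ) : Prop := Measurable f ∧ ∃ C : ℝ, ∀ x, |f x| ≤ C

/-- Bounded measurable complex-valued functions. -/
def BddMeasC (f : M → ℂ) : Prop := Measurable f ∧ ∃ C : ℝ, ∀ x, ‖f x‖ ≤ C

/-- The operator `P_g f := P (1_{g>0} · f)`. -/
def Pg (φ : M → ℝ) (κ : Kernel M M) (g : M → ℝ) : (M → ℝ) → (M → ℝ) :=
  fun f => PR φ κ (Set.indicator {x | 0 < g x} f)

/-- Complex version of `P_g`. -/
def PgC (φ : M → ℝ) (κ : Kernel M M) (g : M → ℝ) : (M → ℂ) → (M → ℂ) :=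
  fun f => PC φ κ (Set.indicator {x | 0 < g x} f)

/-- The indicator function of `{g > 0}`. -/
def oneG (g : M → ℝ) : M → ℝ := Set.indicator {x | 0 < g x} (fun _ => (1 : ℝ))

/-- The normalized restriction `μ̃` of `μ` to `{g > 0}`, i.e.
`μ̃(A) = μ(A ∩ {g>0}) / μ({g>0})`. -/
def mtilde (μ : Measure M) (g : M → ℝ) : Measure M :=
  (μ {x | 0 < g x})⁻¹ • μ.restrict {x | 0 < g x}

/-- The root-of-unity phase `e^{2πi j/k}`. -/
def rootU (k j : ℕ) : ℂ := Complex.exp (2 * (Real.pi : ℂ) * Complex.I * (j : ℂ) / (k : ℂ))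

/-- Basic standing setup: `μ` is a fully supported Borel probability measure, `κ` a
sub-Markov kernel with `κ(x,·) ≪ μ` for all `x`, and `φ` a (bounded) continuous function. -/
structure Setup (μ : Measure M) (κ : Kernel M M) (φ : M → ℝ) : Prop where
  prob : IsProbabilityMeasure μ
  fullSupp : ∀ U : Set M, IsOpen U → U.Nonempty → 0 < μ U
  subMarkov : ∀ x, κ x Set.univ ≤ 1
  ac : ∀ x, κ x ≪ μ
  contφ : Continuous φ

/-- Hypothesis (HA): (i) `P` is strong Feller; (ii) `lam > 0` equals the spectral radius of the
induced operator `T` on `L^∞(M,μ;ℂ)` (where `T` agrees a.e. with the pointwise operator `P` on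
bounded measurable representatives); (iii) the eigenspace of `P` at `lam` in `L^∞(M,μ)` is
one-dimensional, spanned by a continuous nonnegative `g ≢ 0` with `P g = lam·g` and
`∫ g dμ = μ {g>0}`; (iv) `P^*μ = lam·μ`. -/
structure HypHA (μ : Measure M) (κ : Kernel M M) (φ : M → ℝ)
    (T : Lp ℂ ⊤ μ →L[ℂ] Lp ℂ ⊤ μ) (lam : ℝ) (g : M → ℝ) : Prop where
  setup : Setup μ κ φ
  strongFeller : ∀ f : M → ℝ, BddMeas f → Continuous (PR φ κ f)
  lam_pos : 0 < lam
  Tcompat : ∀ f : M → ℂ, BddMeasC f → ∀ F : Lp ℂ ⊤ μ, ⇑F =ᵐ[μ] f →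
      ⇑(T F) =ᵐ[μ] PC φ κ f
  specRad : spectralRadius ℂ T = ENNReal.ofReal lam
  g_cont : Continuous g
  g_nonneg : ∀ x, 0 ≤ g x
  g_ne : g ≠ 0
  g_eigen : PR φ κ g = fun x => lam * g x
  g_int : ∫ x, g x ∂μ = (μ {x | 0 < g x}).toReal
  eigen_dim : ∀ f : M → ℝ, BddMeas f → PR φ κ f =ᵐ[μ] (fun x => lam * f x) →
      ∃ c : ℝ, f =ᵐ[μ] fun x => c * g x
  Pstar : ∀ f : M → ℝ, BddMeas f → ∫ x, PR φ κ f x ∂μ = lam * ∫ x, f x ∂μ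

/-- Membership in the point peripheral spectrum `σ_per(P)`:
`|α| = lam` and `P f = α f` for some nonzero `f ∈ L^∞(M,μ;ℂ)`. -/
def PerSpec (μ : Measure M) (κ : Kernel M M) (φ : M → ℝ) (lam : ℝ) (α : ℂ) : Prop :=
  ‖α‖ = lam ∧ ∃ f : M → ℂ, BddMeasC f ∧ ¬ (f =ᵐ[μ] 0) ∧ PC φ κ f =ᵐ[μ] fun x => α * f x

/-- `σ_per(P) = {lam·e^{2πi j/k} : j = 0, …, k-1}`. -/
def PerSpecEq (μ : Measure M) (κ : Kernel M M) (φ : M → ℝ) (lam : ℝ) (k : ℕ) : Prop :=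
  ∀ α : ℂ, PerSpec μ κ φ lam α ↔ ∃ j : ℕ, j < k ∧ α = (lam : ℂ) * rootU k j

/-- A family of `k` linearly independent, nonnegative, continuous functions with pairwise
disjoint supports, spanning `ker(P^k - lam^k)` in `L^∞(M,μ;ℂ)`, each of integral `μ {g>0}`. -/
structure PreFamily (μ : Measure M) (κ : Kernel M M) (φ : M → ℝ) (lam : ℝ) (g : M → ℝ)
    (k : ℕ) (gi : Fin k → M → ℝ) : Prop where
  cont : ∀ i, Continuous (gi i)
  nonneg : ∀ i x, 0 ≤ gi i x
  indep : LinearIndependent ℝ gi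
  span_ker : ∀ f : M → ℂ, BddMeasC f →
      (((PC φ κ)^[k] f) =ᵐ[μ] fun x => (lam : ℂ) ^ k * f x) ↔
        ∃ c : Fin k → ℂ, f =ᵐ[μ] fun x => ∑ i, c i * (gi i x : ℂ)
  integral : ∀ i, ∫ x, gi i x ∂μ = (μ {x | 0 < g x}).toReal
  disj : ∀ i j, i ≠ j → ∀ x, ¬ (0 < gi i x ∧ 0 < gi j x)

/-- The cyclic family hypothesis: nonnegative continuous `g_0, …, g_{k-1}` supported in `{g>0}`
with pairwise disjoint supports, spanning `ker(P^k - lam^k)` in `L^∞(M,μ;ℂ)`, with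
`∫ g_i dμ = μ {g>0}`, `P g_i = lam·g_{i-1 (mod k)}` and `g = (1/k) ∑ g_i`. -/
structure CyclicFamily (μ : Measure M) (κ : Kernel M M) (φ : M → ℝ) (lam : ℝ) (g : M → ℝ)
    (k : ℕ) [NeZero k] (gi : Fin k → M → ℝ) : Prop where
  cont : ∀ i, Continuous (gi i)
  nonneg : ∀ i x, 0 ≤ gi i x
  supported : ∀ i x, 0 < gi i x → 0 < g x
  disj : ∀ i j, i ≠ j → ∀ x, ¬ (0 < gi i x ∧ 0 < gi j x)
  span_ker : ∀ f : M → ℂ, BddMeasC f →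
      (((PC φ κ)^[k] f) =ᵐ[μ] fun x => (lam : ℂ) ^ k * f x) ↔
        ∃ c : Fin k → ℂ, f =ᵐ[μ] fun x => ∑ i, c i * (gi i x : ℂ)
  integral : ∀ i, ∫ x, gi i x ∂μ = (μ {x | 0 < g x}).toReal
  cycle : ∀ i : Fin k, PR φ κ (gi i) = fun x => lam * gi (i - 1) x
  avg : g = fun x => (1 / (k : ℝ)) * ∑ i, gi i x

/-- The spectral decomposition hypothesis: a closed `P_g`-invariant subspace `V` of
`L^∞({g>0},μ;ℂ)` with `L^∞({g>0},μ;ℂ) = span{g_0,…,g_{k-1}} ⊕ V` and such that the spectral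
radius of `P_g` restricted to `V` is `< lam` (expressed through a geometric bound on the
iterates, via Gelfand's formula). -/
structure SpecDecomp (μ : Measure M) (κ : Kernel M M) (φ : M → ℝ) (lam : ℝ) (g : M → ℝ)
    (k : ℕ) (gi : Fin k → M → ℝ) (V : Submodule ℂ (M → ℂ)) : Prop where
  meas : ∀ v ∈ V, Measurable v
  bdd : ∀ v ∈ V, ∃ C : ℝ, ∀ x, ‖v x‖ ≤ C
  supp : ∀ v ∈ V, ∀ x, ¬ 0 < g x → v x = 0
  invariant : ∀ v ∈ V, PgC φ κ g v ∈ V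
  closed : ∀ (u : ℕ → M → ℂ) (f : M → ℂ), (∀ n, u n ∈ V) → Measurable f →
      (∃ C : ℝ, ∀ x, ‖f x‖ ≤ C) → (∀ x, ¬ 0 < g x → f x = 0) →
      Tendsto (fun n => eLpNorm (u n - f) ⊤ μ) atTop (nhds 0) → f ∈ V
  decomp : ∀ f : M → ℂ, BddMeasC f → (∀ x, ¬ 0 < g x → f x = 0) →
      ∃ c : Fin k → ℂ, ∃ v ∈ V, f = fun x => (∑ i, c i * (gi i x : ℂ)) + v x
  unique : ∀ c : Fin k → ℂ, (fun x => ∑ i, c i * (gi i x : ℂ)) ∈ V → c = 0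
  gap : ∃ r : ℝ, 0 ≤ r ∧ r < lam ∧ ∃ C : ℝ, ∀ n : ℕ, ∀ v ∈ V,
      eLpNorm ((PgC φ κ g)^[n] v) ⊤ μ ≤ ENNReal.ofReal (C * r ^ n) * eLpNorm v ⊤ μ

/-- The operator `P^{k+1} - lam^{k+1}` on complex-valued functions. -/
def Qop (φ : M → ℝ) (κ : Kernel M M) (lam : ℝ) (k : ℕ) : (M → ℂ) → (M → ℂ) :=
  fun h x => (PC φ κ)^[k + 1] h x - (lam : ℂ) ^ (k + 1) * h x

section Aux

variable (μ : Measure M) (κ : Kernel M M) (φ : M → ℝ)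

/-- The (weighted) density of `e^{φ(x)} κ(x,·)` with respect to `μ`. -/
noncomputable def kden : M → M → ℝ := fun x y =>
  Real.exp (φ x) * (Kernel.rnDeriv κ (Kernel.const M μ) x y).toReal

variable {μ κ φ}

lemma kden_nonneg (x y : M) : 0 ≤ kden μ κ φ x y :=
  mul_nonneg (Real.exp_pos _).le ENNReal.toReal_nonneg

lemma measurable_kden (hφ : Measurable φ) :
    Measurable (fun p : M × M => kden μ κ φ p.1 p.2) := by
  have h1 : Measurable fun p : M × M => Real.exp (φ p.1) :=
    Real.measurable_exp.comp (hφ.comp measurable_fst)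
  exact h1.mul (Kernel.measurable_rnDeriv κ (Kernel.const M μ)).ennreal_toReal

lemma kden_meas_right (hφ : Measurable φ) (x : M) :
    Measurable (fun y => kden μ κ φ x y) :=
  measurable_const.mul (Kernel.measurable_rnDeriv_right κ (Kernel.const M μ) x).ennreal_toReal

lemma kden_meas_left (hφ : Measurable φ) (y : M) :
    Measurable (fun x => kden μ κ φ x y) := by
  have h1 : Measurable fun x : M => Real.exp (φ x) := Real.measurable_exp.comp hφ
  exact h1.mul (((Kernel.measurable_rnDeriv κ (Kernel.const M μ)).comp
    (measurable_id.prodMk measurable_const)).ennreal_toReal)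

lemma kernel_withDensity [IsProbabilityMeasure μ] [IsFiniteKernel κ]
    (hac : ∀ x, κ x ≪ μ) (x : M) :
    μ.withDensity (fun y => Kernel.rnDeriv κ (Kernel.const M μ) x y) = κ x := by
  have h1 : Kernel.rnDeriv κ (Kernel.const M μ) x =ᵐ[μ] (κ x).rnDeriv μ := by
    have := Kernel.rnDeriv_eq_rnDeriv_measure (κ := κ) (η := Kernel.const M μ) (a := x)
    simpa [Kernel.const_apply] using this
  rw [withDensity_congr_ae h1]
  exact Measure.withDensity_rnDeriv_eq _ _ (hac x)

lemma integrable_of_bdd {ν : Measure M} [IsFiniteMeasure ν] {ψ : M → ℝ} (hψ : Measurable ψ)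
    {C0 : ℝ} (hb : ∀ y, |ψ y| ≤ C0) : Integrable ψ ν :=
  (integrable_const C0).mono' hψ.aestronglyMeasurable
    (Filter.Eventually.of_forall fun y => by simpa [Real.norm_eq_abs] using hb y)

lemma PR_eq_integral [IsProbabilityMeasure μ] [IsFiniteKernel κ]
    (hac : ∀ x, κ x ≪ μ) {ψ : M → ℝ} (hψ : Measurable ψ)
    {C0 : ℝ} (hb : ∀ y, |ψ y| ≤ C0) (x : M) :
    PR φ κ ψ x = ∫ y, ψ y * kden μ κ φ x y ∂μ := by
  have hk := kernel_withDensity hac x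
  have hfin : ∀ᵐ y ∂μ, Kernel.rnDeriv κ (Kernel.const M μ) x y < ∞ := by
    have h1 : Kernel.rnDeriv κ (Kernel.const M μ) x =ᵐ[μ] (κ x).rnDeriv μ := by
      have := Kernel.rnDeriv_eq_rnDeriv_measure (κ := κ) (η := Kernel.const M μ) (a := x)
      simpa [Kernel.const_apply] using this
    filter_upwards [h1, Measure.rnDeriv_lt_top (κ x) μ] with y h2 h3
    rw [h2]; exact h3
  have hk2 : κ x = μ.withDensity
      (fun y => ((Kernel.rnDeriv κ (Kernel.const M μ) x y).toNNReal : ℝ≥0∞)) := by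
    rw [← hk]
    refine (withDensity_congr_ae ?_).symm
    filter_upwards [hfin] with y hy
    exact ENNReal.coe_toNNReal hy.ne
  have hmeas : Measurable fun y => (Kernel.rnDeriv κ (Kernel.const M μ) x y).toNNReal :=
    (Kernel.measurable_rnDeriv_right κ (Kernel.const M μ) x).ennreal_toNNReal
  show Real.exp (φ x) * ∫ y, ψ y ∂(κ x) = _
  rw [hk2, integral_withDensity_eq_integral_smul hmeas ψ, ← integral_const_mul]
  congr 1
  funext y
  simp only [NNReal.smul_def, smul_eq_mul, kden]
  rw [show ((Kernel.rnDeriv κ (Kernel.const M μ) x y).toNNReal : ℝ)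
      = (Kernel.rnDeriv κ (Kernel.const M μ) x y).toReal from rfl]
  ring

lemma integrable_kden [IsProbabilityMeasure μ] [IsFiniteKernel κ]
    (hac : ∀ x, κ x ≪ μ) (x : M) :
    Integrable (fun y => kden μ κ φ x y) μ := by
  have h1 : ∫⁻ y, Kernel.rnDeriv κ (Kernel.const M μ) x y ∂μ = κ x Set.univ := by
    rw [← kernel_withDensity hac x, withDensity_apply _ MeasurableSet.univ,
      setLIntegral_univ]
  have h2 : Integrable (fun y => (Kernel.rnDeriv κ (Kernel.const M μ) x y).toReal) μ := by
    refine integrable_toReal_of_lintegral_ne_top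
      (Kernel.measurable_rnDeriv_right κ (Kernel.const M μ) x).aemeasurable ?_
    rw [h1]; exact (measure_ne_top _ _)
  exact h2.const_mul _

lemma integrable_bdd_mul_kden [IsProbabilityMeasure μ] [IsFiniteKernel κ]
    (hφ : Measurable φ) (hac : ∀ x, κ x ≪ μ) {u : M → ℝ} (hu : Measurable u) {C0 : ℝ}
    (hb : ∀ y, |u y| ≤ C0) (x : M) :
    Integrable (fun y => u y * kden μ κ φ x y) μ := by
  refine ((integrable_kden (φ := φ) hac x).const_mul C0).mono'
    (hu.mul (kden_meas_right hφ x)).aestronglyMeasurable ?_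
  refine Filter.Eventually.of_forall fun y => ?_
  rw [Real.norm_eq_abs, abs_mul, abs_of_nonneg (kden_nonneg x y)]
  exact mul_le_mul_of_nonneg_right (hb y) (kden_nonneg x y)

lemma integral_kden_le [IsProbabilityMeasure μ] [IsFiniteKernel κ]
    (hac : ∀ x, κ x ≪ μ) (hsub : ∀ x, κ x Set.univ ≤ 1) {B : ℝ}
    (hφB : ∀ x, |φ x| ≤ B) (x : M) :
    ∫ y, kden μ κ φ x y ∂μ ≤ Real.exp B := by
  have h1 : ∫ y, kden μ κ φ x y ∂μ = PR φ κ (fun _ => (1 : ℝ)) x := by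
    rw [PR_eq_integral hac measurable_const (C0 := 1) (fun _ => by norm_num) x]
    simp
  rw [h1]
  show Real.exp (φ x) * ∫ _, (1 : ℝ) ∂(κ x) ≤ Real.exp B
  rw [integral_const]
  have h2 : (κ x Set.univ).toReal ≤ 1 := by
    have := ENNReal.toReal_mono ENNReal.one_ne_top (hsub x)
    simpa using this
  have h3 : Real.exp (φ x) ≤ Real.exp B := Real.exp_le_exp.2 ((abs_le.mp (hφB x)).2)
  calc Real.exp (φ x) * ((κ x Set.univ).toReal • (1 : ℝ))
      ≤ Real.exp B * 1 := by
        rw [smul_eq_mul, mul_one]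
        exact mul_le_mul h3 h2 ENNReal.toReal_nonneg (Real.exp_pos _).le
    _ = Real.exp B := mul_one _

lemma abs_PR_le [IsFiniteKernel κ] (hsub : ∀ x, κ x Set.univ ≤ 1) {B : ℝ}
    (hφB : ∀ x, |φ x| ≤ B) {ψ : M → ℝ} (hψ : Measurable ψ) {C0 : ℝ}
    (hb : ∀ y, |ψ y| ≤ C0) (x : M) :
    |PR φ κ ψ x| ≤ Real.exp B * C0 := by
  have hC0 : 0 ≤ C0 := (abs_nonneg _).trans (hb x)
  show |Real.exp (φ x) * ∫ y, ψ y ∂(κ x)| ≤ _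
  rw [abs_mul, abs_of_nonneg (Real.exp_pos _).le]
  have h1 : |∫ y, ψ y ∂(κ x)| ≤ C0 := by
    have := norm_integral_le_of_norm_le (μ := κ x) (f := ψ) (integrable_const C0)
      (Filter.Eventually.of_forall fun y => by rw [Real.norm_eq_abs]; exact hb y)
    rw [Real.norm_eq_abs] at this
    refine this.trans ?_
    rw [integral_const, smul_eq_mul]
    have h2 : (κ x Set.univ).toReal ≤ 1 := by
      have := ENNReal.toReal_mono ENNReal.one_ne_top (hsub x)
      simpa using this
    nlinarith [ENNReal.toReal_nonneg (a := κ x Set.univ), show (κ x).real Set.univ = (κ x Set.univ).toReal from rfl]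
  have h3 : Real.exp (φ x) ≤ Real.exp B := Real.exp_le_exp.2 ((abs_le.mp (hφB x)).2)
  exact mul_le_mul h3 h1 (abs_nonneg _) ((Real.exp_pos _).le.trans h3)

section RW

variable (μ κ φ)

/-- tail mass function `r_m(y) = ∫ (k(y,z)-m)₊ dμ(z)`. -/
noncomputable def rfun (m : ℝ) : M → ℝ := fun y => ∫ z, max (kden μ κ φ y z - m) 0 ∂μ

/-- truncated two-step density integral `w_m(x,z) = ∫ min(k(y,z),m) k(x,y) dμ(y)`. -/
noncomputable def wfun (m : ℝ) : M → M → ℝ :=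
  fun x z => ∫ y, min (kden μ κ φ y z) m * kden μ κ φ x y ∂μ

/-- `R_m = P r_m`. -/
noncomputable def Rfun (m : ℝ) : M → ℝ := PR φ κ (rfun μ κ φ m)

variable {μ κ φ}

lemma rfun_nonneg (m : ℝ) (y : M) : 0 ≤ rfun μ κ φ m y :=
  integral_nonneg fun z => le_max_right _ _

lemma integrable_rfun_integrand [IsProbabilityMeasure μ] [IsFiniteKernel κ]
    (hφ : Measurable φ) (hac : ∀ x, κ x ≪ μ) {m : ℝ} (hm : 0 ≤ m) (y : M) :
    Integrable (fun z => max (kden μ κ φ y z - m) 0) μ := by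
  refine (integrable_kden (φ := φ) hac y).mono'
    (((kden_meas_right hφ y).sub measurable_const).max measurable_const).aestronglyMeasurable ?_
  refine Filter.Eventually.of_forall fun z => ?_
  rw [Real.norm_eq_abs, abs_of_nonneg (le_max_right _ _)]
  exact max_le (by linarith [kden_nonneg (μ := μ) (κ := κ) (φ := φ) y z])
    (kden_nonneg y z)

lemma rfun_le [IsProbabilityMeasure μ] [IsFiniteKernel κ]
    (hφ : Measurable φ) (hac : ∀ x, κ x ≪ μ) (hsub : ∀ x, κ x Set.univ ≤ 1) {B : ℝ}
    (hφB : ∀ x, |φ x| ≤ B) {m : ℝ} (hm : 0 ≤ m) (y : M) :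
    rfun μ κ φ m y ≤ Real.exp B := by
  have h1 : rfun μ κ φ m y ≤ ∫ z, kden μ κ φ y z ∂μ := by
    refine integral_mono (integrable_rfun_integrand hφ hac hm y)
      (integrable_kden hac y) fun z => ?_
    exact max_le (by linarith [kden_nonneg (μ := μ) (κ := κ) (φ := φ) y z]) (kden_nonneg y z)
  exact h1.trans (integral_kden_le hac hsub hφB y)

lemma abs_rfun_le [IsProbabilityMeasure μ] [IsFiniteKernel κ]
    (hφ : Measurable φ) (hac : ∀ x, κ x ≪ μ) (hsub : ∀ x, κ x Set.univ ≤ 1) {B : ℝ}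
    (hφB : ∀ x, |φ x| ≤ B) {m : ℝ} (hm : 0 ≤ m) (y : M) :
    |rfun μ κ φ m y| ≤ Real.exp B := by
  rw [abs_of_nonneg (rfun_nonneg m y)]
  exact rfun_le hφ hac hsub hφB hm y

lemma measurable_rfun [IsProbabilityMeasure μ] (hφ : Measurable φ) (m : ℝ) :
    Measurable (rfun μ κ φ m) := by
  have hF : StronglyMeasurable (fun p : M × M => max (kden μ κ φ p.1 p.2 - m) 0) :=
    (((measurable_kden hφ).sub measurable_const).max measurable_const).stronglyMeasurable
  exact hF.integral_prod_right'.measurable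

lemma rfun_antitone [IsProbabilityMeasure μ] [IsFiniteKernel κ]
    (hφ : Measurable φ) (hac : ∀ x, κ x ≪ μ) {m m' : ℝ} (hmm : m ≤ m') (hm : 0 ≤ m) (y : M) :
    rfun μ κ φ m' y ≤ rfun μ κ φ m y := by
  refine integral_mono (integrable_rfun_integrand hφ hac (hm.trans hmm) y)
    (integrable_rfun_integrand hφ hac hm y) fun z => ?_
  exact max_le_max (by linarith) le_rfl

lemma tendsto_rfun [IsProbabilityMeasure μ] [IsFiniteKernel κ]
    (hφ : Measurable φ) (hac : ∀ x, κ x ≪ μ) (y : M) :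
    Tendsto (fun n : ℕ => rfun μ κ φ n y) atTop (𝓝 0) := by
  have h0 : (𝓝 (0:ℝ)) = 𝓝 (∫ (_ : M), (0:ℝ) ∂μ) := by simp
  rw [h0]
  apply tendsto_integral_of_dominated_convergence (fun z => kden μ κ φ y z)
  · exact fun n => (((kden_meas_right hφ y).sub measurable_const).max
      measurable_const).aestronglyMeasurable
  · exact integrable_kden hac y
  · intro n
    refine Filter.Eventually.of_forall fun z => ?_
    rw [Real.norm_eq_abs, abs_of_nonneg (le_max_right _ _)]
    exact max_le (by linarith [kden_nonneg (μ := μ) (κ := κ) (φ := φ) y z,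
      Nat.cast_nonneg (α := ℝ) n]) (kden_nonneg y z)
  · refine Filter.Eventually.of_forall fun z => ?_
    have hev : ∀ᶠ n : ℕ in atTop, max (kden μ κ φ y z - n) 0 = 0 := by
      filter_upwards [eventually_ge_atTop ⌈kden μ κ φ y z⌉₊] with n hn
      have : kden μ κ φ y z ≤ n := (Nat.le_ceil _).trans (Nat.cast_le.2 hn)
      exact max_eq_right (by linarith)
    exact Tendsto.congr' (hev.mono fun n hn => hn.symm) tendsto_const_nhds

lemma Rfun_eq [IsProbabilityMeasure μ] [IsFiniteKernel κ]
    (hφ : Measurable φ) (hac : ∀ x, κ x ≪ μ) (hsub : ∀ x, κ x Set.univ ≤ 1) {B : ℝ}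
    (hφB : ∀ x, |φ x| ≤ B) {m : ℝ} (hm : 0 ≤ m) (x : M) :
    Rfun μ κ φ m x = ∫ y, rfun μ κ φ m y * kden μ κ φ x y ∂μ :=
  PR_eq_integral hac (measurable_rfun hφ m) (abs_rfun_le hφ hac hsub hφB hm) x

lemma Rfun_nonneg [IsProbabilityMeasure μ] [IsFiniteKernel κ]
    (hφ : Measurable φ) (hac : ∀ x, κ x ≪ μ) (hsub : ∀ x, κ x Set.univ ≤ 1) {B : ℝ}
    (hφB : ∀ x, |φ x| ≤ B) {m : ℝ} (hm : 0 ≤ m) (x : M) :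
    0 ≤ Rfun μ κ φ m x := by
  rw [Rfun_eq hφ hac hsub hφB hm x]
  exact integral_nonneg fun y => mul_nonneg (rfun_nonneg m y) (kden_nonneg x y)

lemma Rfun_antitone [IsProbabilityMeasure μ] [IsFiniteKernel κ]
    (hφ : Measurable φ) (hac : ∀ x, κ x ≪ μ) (hsub : ∀ x, κ x Set.univ ≤ 1) {B : ℝ}
    (hφB : ∀ x, |φ x| ≤ B) {m m' : ℝ} (hmm : m ≤ m') (hm : 0 ≤ m) (x : M) :
    Rfun μ κ φ m' x ≤ Rfun μ κ φ m x := by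
  rw [Rfun_eq hφ hac hsub hφB hm x, Rfun_eq hφ hac hsub hφB (hm.trans hmm) x]
  refine integral_mono
    (integrable_bdd_mul_kden hφ hac (measurable_rfun hφ m')
      (abs_rfun_le hφ hac hsub hφB (hm.trans hmm)) x)
    (integrable_bdd_mul_kden hφ hac (measurable_rfun hφ m)
      (abs_rfun_le hφ hac hsub hφB hm) x) fun y => ?_
  exact mul_le_mul_of_nonneg_right (rfun_antitone hφ hac hmm hm y) (kden_nonneg x y)

lemma tendsto_Rfun [IsProbabilityMeasure μ] [IsFiniteKernel κ]
    (hφ : Measurable φ) (hac : ∀ x, κ x ≪ μ) (hsub : ∀ x, κ x Set.univ ≤ 1) {B : ℝ}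
    (hφB : ∀ x, |φ x| ≤ B) (x : M) :
    Tendsto (fun n : ℕ => Rfun μ κ φ n x) atTop (𝓝 0) := by
  have heq : ∀ n : ℕ, Rfun μ κ φ n x = ∫ y, rfun μ κ φ n y * kden μ κ φ x y ∂μ :=
    fun n => Rfun_eq hφ hac hsub hφB (Nat.cast_nonneg n) x
  simp_rw [heq]
  have h0 : (𝓝 (0:ℝ)) = 𝓝 (∫ (_ : M), (0:ℝ) ∂μ) := by simp
  rw [h0]
  apply tendsto_integral_of_dominated_convergence (fun y => Real.exp B * kden μ κ φ x y)
  · exact fun n => ((measurable_rfun hφ n).mul (kden_meas_right hφ x)).aestronglyMeasurable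
  · exact (integrable_kden hac x).const_mul _
  · intro n
    refine Filter.Eventually.of_forall fun y => ?_
    rw [Real.norm_eq_abs, abs_mul, abs_of_nonneg (kden_nonneg x y)]
    exact mul_le_mul_of_nonneg_right
      (abs_rfun_le hφ hac hsub hφB (Nat.cast_nonneg n) y) (kden_nonneg x y)
  · refine Filter.Eventually.of_forall fun y => ?_
    have := (tendsto_rfun hφ hac y).mul_const (kden μ κ φ x y)
    rwa [zero_mul] at this

lemma Rfun_small [IsProbabilityMeasure μ] [IsFiniteKernel κ]
    (hφ : Measurable φ) (hac : ∀ x, κ x ≪ μ) (hsub : ∀ x, κ x Set.univ ≤ 1) {B : ℝ}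
    (hφB : ∀ x, |φ x| ≤ B)
    (hSF : ∀ f : M → ℝ, Measurable f → (∃ C : ℝ, ∀ x, |f x| ≤ C) → Continuous (PR φ κ f))
    {ε : ℝ} (hε : 0 < ε) :
    ∃ n : ℕ, ∀ x, Rfun μ κ φ n x < ε := by
  set U : ℕ → Set M := fun n => {x | Rfun μ κ φ n x < ε} with hU
  have hUo : ∀ n, IsOpen (U n) := by
    intro n
    have hcont : Continuous (Rfun μ κ φ n) :=
      hSF (rfun μ κ φ n) (measurable_rfun hφ n)
        ⟨Real.exp B, abs_rfun_le hφ hac hsub hφB (Nat.cast_nonneg n)⟩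
    exact isOpen_lt hcont continuous_const
  have hcov : Set.univ ⊆ ⋃ n, U n := by
    intro x _
    have hev := (tendsto_Rfun hφ hac hsub hφB x).eventually_lt_const hε
    obtain ⟨n, hn⟩ := hev.exists
    exact Set.mem_iUnion.2 ⟨n, hn⟩
  obtain ⟨t, ht⟩ := isCompact_univ.elim_finite_subcover U hUo hcov
  refine ⟨t.sup id, fun x => ?_⟩
  obtain ⟨n, hnt, hn⟩ := Set.mem_iUnion₂.1 (ht (Set.mem_univ x))
  have hle : (n : ℝ) ≤ ((t.sup id : ℕ) : ℝ) := Nat.cast_le.2 (Finset.le_sup (f := id) hnt)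
  exact lt_of_le_of_lt (Rfun_antitone hφ hac hsub hφB hle (Nat.cast_nonneg n) x) hn

lemma wfun_eq_PR [IsProbabilityMeasure μ] [IsFiniteKernel κ]
    (hφ : Measurable φ) (hac : ∀ x, κ x ≪ μ) {m : ℝ} (hm : 0 ≤ m) (x z : M) :
    wfun μ κ φ m x z = PR φ κ (fun y => min (kden μ κ φ y z) m) x :=
  (PR_eq_integral hac ((kden_meas_left hφ z).min measurable_const)
    (C0 := m) (fun y => by
      rw [abs_of_nonneg (le_min (kden_nonneg y z) hm)]; exact min_le_right _ _) x).symm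

lemma wfun_cont [IsProbabilityMeasure μ] [IsFiniteKernel κ]
    (hφ : Measurable φ) (hac : ∀ x, κ x ≪ μ)
    (hSF : ∀ f : M → ℝ, Measurable f → (∃ C : ℝ, ∀ x, |f x| ≤ C) → Continuous (PR φ κ f))
    {m : ℝ} (hm : 0 ≤ m) (z : M) :
    Continuous (fun x => wfun μ κ φ m x z) := by
  have hcont := hSF (fun y => min (kden μ κ φ y z) m)
    ((kden_meas_left hφ z).min measurable_const)
    ⟨m, fun y => by
      rw [abs_of_nonneg (le_min (kden_nonneg y z) hm)]; exact min_le_right _ _⟩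
  exact hcont.congr fun x => (wfun_eq_PR hφ hac hm x z).symm

lemma abs_wfun_le [IsProbabilityMeasure μ] [IsFiniteKernel κ]
    (hφ : Measurable φ) (hac : ∀ x, κ x ≪ μ) (hsub : ∀ x, κ x Set.univ ≤ 1) {B : ℝ}
    (hφB : ∀ x, |φ x| ≤ B) {m : ℝ} (hm : 0 ≤ m) (x z : M) :
    |wfun μ κ φ m x z| ≤ Real.exp B * m := by
  rw [wfun_eq_PR hφ hac hm x z]
  exact abs_PR_le hsub hφB ((kden_meas_left hφ z).min measurable_const)
    (fun y => by
      rw [abs_of_nonneg (le_min (kden_nonneg y z) hm)]; exact min_le_right _ _) x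

lemma measurable_wfun [IsProbabilityMeasure μ] (hφ : Measurable φ) (m : ℝ) (x : M) :
    Measurable (fun z => wfun μ κ φ m x z) := by
  have hF : StronglyMeasurable
      (fun p : M × M => min (kden μ κ φ p.2 p.1) m * kden μ κ φ x p.2) :=
    ((((measurable_kden hφ).comp (measurable_snd.prodMk measurable_fst)).min
      measurable_const).mul ((kden_meas_right hφ x).comp measurable_snd)).stronglyMeasurable
  exact hF.integral_prod_right'.measurable

end RW

section Key

variable {μ : Measure M} {κ : Kernel M M} {φ : M → ℝ}

lemma abs_triangle4 (a b a' b' : ℝ) :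
    |(a + b) - (a' + b')| ≤ |a - a'| + (|b| + |b'|) := by
  have h1 : |(a + b) - (a' + b')| = |(a - a') + (b - b')| := by
    congr 1; ring
  rw [h1]
  refine (abs_add_le _ _).trans (add_le_add le_rfl ?_)
  calc |b - b'| = |b + -b'| := by rw [sub_eq_add_neg]
    _ ≤ |b| + |-b'| := abs_add_le _ _
    _ = |b| + |b'| := by rw [abs_neg]

lemma key_estimate [IsProbabilityMeasure μ] [IsFiniteKernel κ]
    (hφ : Measurable φ) (hac : ∀ x, κ x ≪ μ) (hsub : ∀ x, κ x Set.univ ≤ 1) {B : ℝ}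
    (hφB : ∀ x, |φ x| ≤ B)
    (hSF : ∀ f : M → ℝ, Measurable f → (∃ C : ℝ, ∀ x, |f x| ≤ C) → Continuous (PR φ κ f))
    {m : ℝ} (hm : 0 ≤ m) {f : M → ℝ} (hfm : Measurable f) (hf1 : ∀ z, |f z| ≤ 1)
    (x x₀ : M) :
    |PR φ κ (PR φ κ f) x - PR φ κ (PR φ κ f) x₀| ≤
      (∫ z, |wfun μ κ φ m x z - wfun μ κ φ m x₀ z| ∂μ)
        + (Rfun μ κ φ m x + Rfun μ κ φ m x₀) := by
  set C := Real.exp B with hC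
  have hCpos : 0 < C := Real.exp_pos B
  set ψ := PR φ κ f with hψ
  have hψc : Continuous ψ := hSF f hfm ⟨1, hf1⟩
  have hψm : Measurable ψ := hψc.measurable
  have hψb : ∀ y, |ψ y| ≤ C * 1 := fun y => abs_PR_le hsub hφB hfm hf1 y
  set Tm : M → ℝ := fun y => ∫ z, f z * min (kden μ κ φ y z) m ∂μ with hTmdef
  set Sm : M → ℝ := fun y => ∫ z, f z * max (kden μ κ φ y z - m) 0 ∂μ with hSmdef
  have habs_min : ∀ y z : M, |min (kden μ κ φ y z) m| ≤ m := fun y z => by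
    rw [abs_of_nonneg (le_min (kden_nonneg y z) hm)]; exact min_le_right _ _
  have hTm_meas : Measurable Tm := by
    have hF : StronglyMeasurable (fun p : M × M => f p.2 * min (kden μ κ φ p.1 p.2) m) :=
      ((hfm.comp measurable_snd).mul
        ((measurable_kden hφ).min measurable_const)).stronglyMeasurable
    exact hF.integral_prod_right'.measurable
  have hSm_meas : Measurable Sm := by
    have hF : StronglyMeasurable
        (fun p : M × M => f p.2 * max (kden μ κ φ p.1 p.2 - m) 0) :=
      ((hfm.comp measurable_snd).mul
        (((measurable_kden hφ).sub measurable_const).max measurable_const)).stronglyMeasurable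
    exact hF.integral_prod_right'.measurable
  have hTm_bdd : ∀ y, |Tm y| ≤ m := by
    intro y
    have h := norm_integral_le_of_norm_le (μ := μ)
      (f := fun z => f z * min (kden μ κ φ y z) m) (integrable_const m)
      (Filter.Eventually.of_forall fun z => by
        rw [Real.norm_eq_abs, abs_mul]
        calc |f z| * |min (kden μ κ φ y z) m| ≤ 1 * m :=
          mul_le_mul (hf1 z) (habs_min y z) (abs_nonneg _) zero_le_one
          _ = m := one_mul m)
    rw [Real.norm_eq_abs] at h
    simpa using h
  have hSm_bdd : ∀ y, |Sm y| ≤ rfun μ κ φ m y := by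
    intro y
    have h := norm_integral_le_of_norm_le (μ := μ)
      (f := fun z => f z * max (kden μ κ φ y z - m) 0)
      (integrable_rfun_integrand hφ hac hm y)
      (Filter.Eventually.of_forall fun z => by
        rw [Real.norm_eq_abs, abs_mul,
          abs_of_nonneg (le_max_right (kden μ κ φ y z - m) 0)]
        calc |f z| * max (kden μ κ φ y z - m) 0
            ≤ 1 * max (kden μ κ φ y z - m) 0 :=
              mul_le_mul_of_nonneg_right (hf1 z) (le_max_right _ _)
          _ = max (kden μ κ φ y z - m) 0 := one_mul _)
    rw [Real.norm_eq_abs] at h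
    exact h
  have hSm_bdd' : ∀ y, |Sm y| ≤ C := fun y =>
    (hSm_bdd y).trans (rfun_le hφ hac hsub hφB hm y)
  have h_split : ∀ y, ψ y = Tm y + Sm y := by
    intro y
    have int1 : Integrable (fun z => f z * min (kden μ κ φ y z) m) μ :=
      integrable_of_bdd (hfm.mul ((kden_meas_right hφ y).min measurable_const))
        (C0 := m) (fun z => by
          rw [abs_mul]
          calc |f z| * |min (kden μ κ φ y z) m| ≤ 1 * m :=
            mul_le_mul (hf1 z) (habs_min y z) (abs_nonneg _) zero_le_one
            _ = m := one_mul m)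
    have int2 : Integrable (fun z => f z * max (kden μ κ φ y z - m) 0) μ := by
      refine (integrable_rfun_integrand hφ hac hm y).mono'
        (hfm.mul (((kden_meas_right hφ y).sub measurable_const).max
          measurable_const)).aestronglyMeasurable
        (Filter.Eventually.of_forall fun z => ?_)
      rw [Real.norm_eq_abs, abs_mul,
        abs_of_nonneg (le_max_right (kden μ κ φ y z - m) 0)]
      calc |f z| * max (kden μ κ φ y z - m) 0
          ≤ 1 * max (kden μ κ φ y z - m) 0 :=
            mul_le_mul_of_nonneg_right (hf1 z) (le_max_right _ _)
        _ = max (kden μ κ φ y z - m) 0 := one_mul _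
    have h0 : ψ y = ∫ z, f z * kden μ κ φ y z ∂μ := PR_eq_integral hac hfm hf1 y
    rw [h0]
    show _ = (∫ z, f z * min (kden μ κ φ y z) m ∂μ)
        + ∫ z, f z * max (kden μ κ φ y z - m) 0 ∂μ
    rw [← integral_add int1 int2]
    congr 1
    funext z
    rw [← mul_add]
    congr 1
    rcases le_total (kden μ κ φ y z) m with h | h
    · rw [min_eq_left h, max_eq_right (by linarith), add_zero]
    · rw [min_eq_right h, max_eq_left (by linarith)]; ring
  -- main decomposition
  have main : ∀ x' : M, PR φ κ ψ x' = (∫ z, f z * wfun μ κ φ m x' z ∂μ)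
      + ∫ y, Sm y * kden μ κ φ x' y ∂μ := by
    intro x'
    have intT : Integrable (fun y => Tm y * kden μ κ φ x' y) μ :=
      integrable_bdd_mul_kden hφ hac hTm_meas hTm_bdd x'
    have intS : Integrable (fun y => Sm y * kden μ κ φ x' y) μ :=
      integrable_bdd_mul_kden hφ hac hSm_meas hSm_bdd' x'
    have h1 : PR φ κ ψ x'
        = ∫ y, (Tm y * kden μ κ φ x' y + Sm y * kden μ κ φ x' y) ∂μ := by
      rw [PR_eq_integral hac hψm hψb x']
      congr 1
      funext y
      rw [h_split y, add_mul]
    rw [h1, integral_add intT intS]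
    congr 1
    -- Fubini step
    have hmeasF : Measurable
        (fun p : M × M => f p.2 * min (kden μ κ φ p.1 p.2) m * kden μ κ φ x' p.1) :=
      ((hfm.comp measurable_snd).mul ((measurable_kden hφ).min measurable_const)).mul
        ((kden_meas_right hφ x').comp measurable_fst)
    have hg : Integrable (fun p : M × M => m * kden μ κ φ x' p.1) (μ.prod μ) := by
      have h3 : Integrable (fun y => m * kden μ κ φ x' y) μ :=
        (integrable_kden hac x').const_mul m
      have hmap : Measure.map Prod.fst (μ.prod μ) = μ := by
        rw [Measure.map_fst_prod]; simp
      rw [← hmap] at h3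
      have h5 := (integrable_map_measure
        (by rw [hmap]
            exact (measurable_const.mul (kden_meas_right hφ x')).aestronglyMeasurable)
        measurable_fst.aemeasurable).mp h3
      rw [hmap] at h5
      exact h5
    have hint : Integrable
        (Function.uncurry fun y z => f z * min (kden μ κ φ y z) m * kden μ κ φ x' y)
        (μ.prod μ) := by
      refine hg.mono' hmeasF.aestronglyMeasurable
        (Filter.Eventually.of_forall fun p => ?_)
      rw [Function.uncurry]
      rw [Real.norm_eq_abs, abs_mul, abs_mul, abs_of_nonneg (kden_nonneg x' p.1)]
      calc |f p.2| * |min (kden μ κ φ p.1 p.2) m| * kden μ κ φ x' p.1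
          ≤ 1 * m * kden μ κ φ x' p.1 :=
            mul_le_mul_of_nonneg_right
              (mul_le_mul (hf1 p.2) (habs_min p.1 p.2) (abs_nonneg _) zero_le_one)
              (kden_nonneg x' p.1)
        _ = m * kden μ κ φ x' p.1 := by rw [one_mul]
    have h2 : (fun y => Tm y * kden μ κ φ x' y)
        = fun y => ∫ z, f z * min (kden μ κ φ y z) m * kden μ κ φ x' y ∂μ := by
      funext y
      show (∫ z, f z * min (kden μ κ φ y z) m ∂μ) * kden μ κ φ x' y = _
      exact (integral_mul_const _ _).symm
    rw [h2, integral_integral_swap hint]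
    congr 1
    funext z
    have h4 : (fun y => f z * min (kden μ κ φ y z) m * kden μ κ φ x' y)
        = fun y => f z * (min (kden μ κ φ y z) m * kden μ κ φ x' y) := by
      funext y; ring
    rw [h4, integral_const_mul]
    rfl
  -- conclude
  have intwx : ∀ x' : M, Integrable (fun z => f z * wfun μ κ φ m x' z) μ := by
    intro x'
    refine integrable_of_bdd (hfm.mul (measurable_wfun hφ m x')) (C0 := C * m)
      (fun z => ?_)
    rw [abs_mul]
    calc |f z| * |wfun μ κ φ m x' z| ≤ 1 * (C * m) :=
      mul_le_mul (hf1 z) (abs_wfun_le hφ hac hsub hφB hm x' z) (abs_nonneg _) zero_le_one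
      _ = C * m := one_mul _
  have hA : |(∫ z, f z * wfun μ κ φ m x z ∂μ) - ∫ z, f z * wfun μ κ φ m x₀ z ∂μ|
      ≤ ∫ z, |wfun μ κ φ m x z - wfun μ κ φ m x₀ z| ∂μ := by
    rw [← integral_sub (intwx x) (intwx x₀)]
    have h7 : (fun z => f z * wfun μ κ φ m x z - f z * wfun μ κ φ m x₀ z)
        = fun z => f z * (wfun μ κ φ m x z - wfun μ κ φ m x₀ z) := by
      funext z; ring
    rw [h7]
    have intabs : Integrable (fun z => |wfun μ κ φ m x z - wfun μ κ φ m x₀ z|) μ := by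
      refine integrable_of_bdd
        (((measurable_wfun hφ m x).sub (measurable_wfun hφ m x₀)).abs)
        (C0 := C * m + C * m) (fun z => ?_)
      rw [abs_abs]
      calc |wfun μ κ φ m x z - wfun μ κ φ m x₀ z|
          ≤ |wfun μ κ φ m x z| + |wfun μ κ φ m x₀ z| := abs_sub _ _
        _ ≤ C * m + C * m := add_le_add (abs_wfun_le hφ hac hsub hφB hm x z)
            (abs_wfun_le hφ hac hsub hφB hm x₀ z)
    have h := norm_integral_le_of_norm_le intabs
      (Filter.Eventually.of_forall fun z => by
        rw [Real.norm_eq_abs, abs_mul]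
        calc |f z| * |wfun μ κ φ m x z - wfun μ κ φ m x₀ z|
            ≤ 1 * |wfun μ κ φ m x z - wfun μ κ φ m x₀ z| :=
              mul_le_mul_of_nonneg_right (hf1 z) (abs_nonneg _)
          _ = |wfun μ κ φ m x z - wfun μ κ φ m x₀ z| := one_mul _)
    rw [Real.norm_eq_abs] at h
    exact h
  have hB : ∀ x' : M, |∫ y, Sm y * kden μ κ φ x' y ∂μ| ≤ Rfun μ κ φ m x' := by
    intro x'
    have h := norm_integral_le_of_norm_le
      (f := fun y => Sm y * kden μ κ φ x' y)
      (integrable_bdd_mul_kden hφ hac (measurable_rfun hφ m)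
        (abs_rfun_le hφ hac hsub hφB hm) x')
      (Filter.Eventually.of_forall fun y => by
        rw [Real.norm_eq_abs, abs_mul, abs_of_nonneg (kden_nonneg x' y)]
        exact mul_le_mul_of_nonneg_right (hSm_bdd y) (kden_nonneg x' y))
    rw [Real.norm_eq_abs] at h
    rw [Rfun_eq hφ hac hsub hφB hm x']
    exact h
  rw [main x, main x₀]
  have htri := abs_triangle4 (∫ z, f z * wfun μ κ φ m x z ∂μ)
    (∫ y, Sm y * kden μ κ φ x y ∂μ) (∫ z, f z * wfun μ κ φ m x₀ z ∂μ)
    (∫ y, Sm y * kden μ κ φ x₀ y ∂μ)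
  linarith [hA, hB x, hB x₀]

lemma equicont_estimate [IsProbabilityMeasure μ] [IsFiniteKernel κ]
    (hφ : Measurable φ) (hac : ∀ x, κ x ≪ μ) (hsub : ∀ x, κ x Set.univ ≤ 1) {B : ℝ}
    (hφB : ∀ x, |φ x| ≤ B)
    (hSF : ∀ f : M → ℝ, Measurable f → (∃ C : ℝ, ∀ x, |f x| ≤ C) → Continuous (PR φ κ f))
    (x₀ : M) {ε : ℝ} (hε : 0 < ε) :
    ∀ᶠ x in 𝓝 x₀, ∀ f : M → ℝ, Measurable f → (∀ z, |f z| ≤ 1) →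
      |PR φ κ (PR φ κ f) x - PR φ κ (PR φ κ f) x₀| < ε := by
  obtain ⟨n, hn⟩ := Rfun_small hφ hac hsub hφB hSF (show 0 < ε/4 by linarith)
  set m : ℝ := (n : ℝ) with hmdef
  have hm : 0 ≤ m := Nat.cast_nonneg n
  have hW : ∀ᶠ x in 𝓝 x₀,
      (∫ z, |wfun μ κ φ m x z - wfun μ κ φ m x₀ z| ∂μ) < ε/2 := by
    by_contra hcon
    rw [Filter.not_eventually] at hcon
    have hseq : ∀ k : ℕ, ∃ x, x ∈ Metric.ball x₀ (1/((k:ℝ)+1)) ∧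
        ¬ ((∫ z, |wfun μ κ φ m x z - wfun μ κ φ m x₀ z| ∂μ) < ε/2) := by
      intro k
      have := Filter.frequently_iff.mp hcon
        (Metric.ball_mem_nhds (ε := 1/((k:ℝ)+1)) x₀ (by positivity))
      obtain ⟨x, hx1, hx2⟩ := this
      exact ⟨x, hx1, hx2⟩
    choose u hu1 hu2 using hseq
    have hu : Tendsto u atTop (𝓝 x₀) := by
      rw [tendsto_iff_dist_tendsto_zero]
      refine squeeze_zero (fun k => dist_nonneg)
        (fun k => (Metric.mem_ball.mp (hu1 k)).le) ?_
      exact tendsto_one_div_add_atTop_nhds_zero_nat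
    have hlim : Tendsto (fun k => ∫ z, |wfun μ κ φ m (u k) z - wfun μ κ φ m x₀ z| ∂μ)
        atTop (𝓝 0) := by
      have h0 : (𝓝 (0:ℝ)) = 𝓝 (∫ (_ : M), (0:ℝ) ∂μ) := by simp
      rw [h0]
      apply tendsto_integral_of_dominated_convergence
        (fun _ => Real.exp B * m + Real.exp B * m)
      · exact fun k => (((measurable_wfun hφ m (u k)).sub
          (measurable_wfun hφ m x₀)).abs).aestronglyMeasurable
      · exact integrable_const _
      · intro k
        refine Filter.Eventually.of_forall fun z => ?_
        rw [Real.norm_eq_abs, abs_abs]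
        calc |wfun μ κ φ m (u k) z - wfun μ κ φ m x₀ z|
            ≤ |wfun μ κ φ m (u k) z| + |wfun μ κ φ m x₀ z| := abs_sub _ _
          _ ≤ Real.exp B * m + Real.exp B * m :=
            add_le_add (abs_wfun_le hφ hac hsub hφB hm (u k) z)
              (abs_wfun_le hφ hac hsub hφB hm x₀ z)
      · refine Filter.Eventually.of_forall fun z => ?_
        have h1 : Tendsto (fun k => wfun μ κ φ m (u k) z) atTop
            (𝓝 (wfun μ κ φ m x₀ z)) :=
          ((wfun_cont hφ hac hSF hm z).tendsto x₀).comp hu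
        have h2 := (h1.sub (tendsto_const_nhds (x := wfun μ κ φ m x₀ z))).abs
        simpa using h2
    have hge : ∀ k, ε/2 ≤ ∫ z, |wfun μ κ φ m (u k) z - wfun μ κ φ m x₀ z| ∂μ :=
      fun k => not_lt.mp (hu2 k)
    have hcontra := ge_of_tendsto hlim (Filter.Eventually.of_forall hge)
    linarith
  filter_upwards [hW] with x hx f hfm hf1
  have hk := key_estimate hφ hac hsub hφB hSF hm hfm hf1 x x₀
  have h1 := hn x
  have h2 := hn x₀
  calc |PR φ κ (PR φ κ f) x - PR φ κ (PR φ κ f) x₀|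
      ≤ (∫ z, |wfun μ κ φ m x z - wfun μ κ φ m x₀ z| ∂μ)
        + (Rfun μ κ φ m x + Rfun μ κ φ m x₀) := hk
    _ < ε := by linarith

end Key

end Aux

/-- If `P` is strong Feller, then for every `n ≥ 2` the operator induced by
`P^n` on `L^∞(M,μ)` is a compact operator (the image of the unit ball is relatively compact
in the essential-supremum norm). -/

theorem statement0 (μ : Measure M) (κ : Kernel M M) (φ : M → ℝ)
    (hsetup : Setup μ κ φ)
    (hSF : ∀ f : M → ℝ, BddMeas f → Continuous (PR φ κ f))
    (T : Lp ℝ ⊤ μ →L[ℝ] Lp ℝ ⊤ μ)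
    (hT : ∀ f : M → ℝ, BddMeas f → ∀ F : Lp ℝ ⊤ μ, ⇑F =ᵐ[μ] f → ⇑(T F) =ᵐ[μ] PR φ κ f) :
    ∀ n : ℕ, 2 ≤ n → IsCompactOperator ⇑(T ^ n) := by
  intro n hn
  haveI hμ : IsProbabilityMeasure μ := hsetup.prob
  haveI hκ : IsFiniteKernel κ := ⟨⟨1, ENNReal.one_lt_top, fun x => hsetup.subMarkov x⟩⟩
  haveI hNM : Nonempty M := by
    by_contra h
    rw [not_nonempty_iff] at h
    have h1 : μ Set.univ = 1 := measure_univ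
    rw [Set.univ_eq_empty_iff.mpr h, measure_empty] at h1
    exact zero_ne_one h1
  obtain ⟨xB, hxB⟩ := (continuous_abs.comp hsetup.contφ).exists_forall_ge
    (by rw [Filter.cocompact_eq_bot]; exact tendsto_bot)
  set B : ℝ := |φ xB| with hBdef
  have hφB : ∀ x, |φ x| ≤ B := fun x => hxB x
  set C : ℝ := Real.exp B with hCdef
  have hφm : Measurable φ := hsetup.contφ.measurable
  have hac := hsetup.ac
  have hsub := hsetup.subMarkov
  have hSF' : ∀ f : M → ℝ, Measurable f → (∃ C : ℝ, ∀ x, |f x| ≤ C) →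
      Continuous (PR φ κ f) := fun f hf hb => hSF f ⟨hf, hb⟩
  let A : Set (M →ᵇ ℝ) := {h | ∃ f : M → ℝ, Measurable f ∧ (∀ z, |f z| ≤ 1) ∧
      ∀ x, h x = PR φ κ (PR φ κ f) x}
  have hApt : ∀ (h : M →ᵇ ℝ) (x : M), h ∈ A → h x ∈ Set.Icc (-(C*(C*1))) (C*(C*1)) := by
    rintro h x ⟨f, hfm, hf1, hfe⟩
    have hψb : ∀ y, |PR φ κ f y| ≤ C * 1 := fun y => abs_PR_le hsub hφB hfm hf1 y
    have h2 := abs_PR_le hsub hφB (hSF' f hfm ⟨1, hf1⟩).measurable hψb x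
    rw [hfe x]
    exact Set.mem_Icc.mpr ⟨neg_le_of_abs_le h2, le_of_abs_le h2⟩
  have hEq : Equicontinuous ((↑) : A → M → ℝ) := by
    intro x₀
    rw [Metric.equicontinuousAt_iff_right]
    intro ε hε
    filter_upwards [equicont_estimate hφm hac hsub hφB hSF' x₀ hε] with x hx i
    obtain ⟨f, hfm, hf1, hfe⟩ := i.2
    rw [Real.dist_eq, hfe x, hfe x₀, abs_sub_comm]
    exact hx f hfm hf1
  have hcomp : IsCompact (closure A) :=
    BoundedContinuousFunction.arzela_ascoli
      (Set.Icc (-(C*(C*1))) (C*(C*1))) isCompact_Icc A hApt hEq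
  let Φ : (M →ᵇ ℝ) →L[ℝ] Lp ℝ ⊤ μ := BoundedContinuousFunction.toLp ⊤ μ ℝ
  have hK : IsCompact (Φ '' closure A) := hcomp.image Φ.continuous
  have hT2 : IsCompactOperator ⇑(T ^ 2) := by
    refine ⟨Φ '' closure A, hK, ?_⟩
    refine Filter.mem_of_superset (Metric.closedBall_mem_nhds 0 one_pos) ?_
    intro F hF
    rw [Set.mem_preimage]
    have hFnorm : ‖F‖ ≤ 1 := by rwa [Metric.mem_closedBall, dist_zero_right] at hF
    set f : M → ℝ := fun x => max (-1) (min (F x) 1) with hfdef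
    have hfm : Measurable f :=
      measurable_const.max ((Lp.stronglyMeasurable F).measurable.min measurable_const)
    have hf1 : ∀ z, |f z| ≤ 1 := by
      intro z
      rw [abs_le]
      exact ⟨le_max_left _ _, max_le (by norm_num) (min_le_right _ _)⟩
    have hFf : ⇑F =ᵐ[μ] f := by
      have h3 : eLpNorm (⇑F) ⊤ μ ≠ ⊤ := Lp.eLpNorm_ne_top F
      have h2 : eLpNorm (⇑F) ⊤ μ ≤ 1 := by
        refine (ENNReal.toReal_le_toReal h3 ENNReal.one_ne_top).mp ?_
        rw [ENNReal.toReal_one, ← Lp.norm_def]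
        exact hFnorm
      have h2' : eLpNormEssSup (⇑F) μ ≤ 1 := by rwa [eLpNorm_exponent_top] at h2
      filter_upwards [ae_le_eLpNormEssSup (f := ⇑F) (μ := μ)] with z hz
      have h6 : (‖F z‖₊ : ℝ≥0∞) ≤ 1 := le_trans hz h2'
      rw [ENNReal.coe_le_one_iff] at h6
      have h7 : ‖F z‖ ≤ 1 := by exact_mod_cast h6
      rw [Real.norm_eq_abs] at h7
      show F z = max (-1) (min (F z) 1)
      rw [min_eq_left (abs_le.mp h7).2, max_eq_right (abs_le.mp h7).1]
    have hstep1 := hT f ⟨hfm, 1, hf1⟩ F hFf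
    set ψ : M → ℝ := PR φ κ f with hψdef
    have hψc : Continuous ψ := hSF' f hfm ⟨1, hf1⟩
    have hψb : ∀ y, |ψ y| ≤ C * 1 := fun y => abs_PR_le hsub hφB hfm hf1 y
    have hstep2 := hT ψ ⟨hψc.measurable, C*1, hψb⟩ (T F) hstep1
    have hg2c : Continuous (PR φ κ ψ) := hSF' ψ hψc.measurable ⟨C*1, hψb⟩
    let g : M →ᵇ ℝ := BoundedContinuousFunction.mkOfCompact ⟨PR φ κ ψ, hg2c⟩
    have hgA : g ∈ A := ⟨f, hfm, hf1, fun x => rfl⟩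
    refine ⟨g, subset_closure hgA, ?_⟩
    refine Lp.ext ?_
    have hΦ : ⇑(Φ g) =ᵐ[μ] ⇑g := BoundedContinuousFunction.coeFn_toLp ⊤ μ ℝ g
    have hcoe : ⇑((T ^ 2) F) =ᵐ[μ] PR φ κ ψ := by
      have hTT : (T ^ 2) F = T (T F) := by rw [pow_two]; rfl
      rw [hTT]
      exact hstep2
    exact hΦ.trans hcoe.symm
  have hpow : ⇑(T ^ n) = ⇑(T ^ (n - 2)) ∘ ⇑(T ^ 2) := by
    have h : n - 2 + 2 = n := Nat.sub_add_cancel hn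
    rw [← h, pow_add]
    rfl
  rw [hpow]
  exact hT2.continuous_comp (T ^ (n - 2)).continuous


end

end QEM
end

section
/- Assume Hypothesis (HA). Then there exists a natural number k ≥ 1 such that σ_per(P) = {λ e^{2πi j/k} : j = 0, 1, …, k−1}; in particular the point peripheral spectrum of P is finite and consists exactly of λ times the k-th roots of unity. -/
open MeasureTheory ProbabilityTheory Filter Topology

namespace QEM

noncomputable section

variable {M : Type*} [MetricSpace M] [CompactSpace M] [MeasurableSpace M] [BorelSpace M]

/-! ### Auxiliary development for statement3 -/

section Aux
set_option linter.unusedSectionVars false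

variable {μ : Measure M} {κ : Kernel M M} {φ : M → ℝ}
variable {T : Lp ℂ ⊤ μ →L[ℂ] Lp ℂ ⊤ μ} {lam : ℝ} {g : M → ℝ}

lemma Setup.finMeas (h : Setup μ κ φ) (x : M) : IsFiniteMeasure (κ x) :=
  ⟨lt_of_le_of_lt (h.subMarkov x) ENNReal.one_lt_top⟩

lemma Setup.aeKernel (h : Setup μ κ φ) {X : Type*} {p q : M → X} (hpq : p =ᵐ[μ] q) (x : M) :
    p =ᵐ[κ x] q := hpq.filter_mono (h.ac x).ae_le

lemma integrable_of_bddC {ν : Measure M} [IsFiniteMeasure ν] {f : M → ℂ} (hf : BddMeasC f) :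
    Integrable f ν := by
  obtain ⟨hm, C, hC⟩ := hf
  exact ⟨hm.aestronglyMeasurable, HasFiniteIntegral.of_bounded (ae_of_all _ hC)⟩

lemma integrable_of_bddR {ν : Measure M} [IsFiniteMeasure ν] {f : M → ℝ} (hf : BddMeas f) :
    Integrable f ν := by
  obtain ⟨hm, C, hC⟩ := hf
  exact ⟨hm.aestronglyMeasurable, HasFiniteIntegral.of_bounded (ae_of_all _ hC)⟩

lemma HypHA.nonempty (h : HypHA μ κ φ T lam g) : Nonempty M := by
  by_contra h'
  rw [not_nonempty_iff] at h'
  exact h.g_ne (funext fun x => (h'.false x).elim)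

lemma cont_bdd [Nonempty M] {f : M → ℝ} (hf : Continuous f) : ∃ C : ℝ, ∀ x, f x ≤ C := by
  obtain ⟨x₀, -, hx₀⟩ := isCompact_univ.exists_isMaxOn Set.univ_nonempty hf.continuousOn
  exact ⟨f x₀, fun x => hx₀ (Set.mem_univ x)⟩

lemma HypHA.g_bdd (h : HypHA μ κ φ T lam g) : ∃ C : ℝ, ∀ x, g x ≤ C := by
  have := h.nonempty
  exact cont_bdd h.g_cont

lemma HypHA.bddMeas_g (h : HypHA μ κ φ T lam g) : BddMeas g := by
  obtain ⟨C, hC⟩ := h.g_bdd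
  exact ⟨h.g_cont.measurable, C, fun x => by
    rw [abs_of_nonneg (h.g_nonneg x)]; exact hC x⟩

/-- norm bound for integrals against a sub-probability measure -/
lemma norm_int_le {ν : Measure M} [IsFiniteMeasure ν] (hν : ν Set.univ ≤ 1)
    {E : Type*} [NormedAddCommGroup E] [NormedSpace ℝ E] {f : M → E} {C : ℝ}
    (hC : ∀ y, ‖f y‖ ≤ C) : ‖∫ y, f y ∂ν‖ ≤ max C 0 := by
  have h1 : ‖∫ y, f y ∂ν‖ ≤ max C 0 * (ν Set.univ).toReal :=
    norm_integral_le_of_norm_le_const (ae_of_all _ fun y => (hC y).trans (le_max_left _ _))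
  have h2 : (ν Set.univ).toReal ≤ 1 := by
    have := ENNReal.toReal_mono ENNReal.one_ne_top hν
    simpa using this
  calc ‖∫ y, f y ∂ν‖ ≤ max C 0 * (ν Set.univ).toReal := h1
    _ ≤ max C 0 * 1 := by
        exact mul_le_mul_of_nonneg_left h2 (le_max_right C 0)
    _ = max C 0 := mul_one _

lemma HypHA.bddMeas_PR (h : HypHA μ κ φ T lam g) {f : M → ℝ} (hf : BddMeas f) :
    BddMeas (PR φ κ f) := by
  have hne : Nonempty M := h.nonempty
  obtain ⟨Cφ, hCφ⟩ := cont_bdd h.setup.contφ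
  obtain ⟨C, hC⟩ := hf.2
  refine ⟨(h.strongFeller f hf).measurable, Real.exp Cφ * max C 0, fun x => ?_⟩
  haveI := h.setup.finMeas x
  have h1 : |∫ y, f y ∂κ x| ≤ max C 0 := by
    have := norm_int_le (h.setup.subMarkov x) (f := f) (C := C)
      (fun y => by rw [Real.norm_eq_abs]; exact hC y)
    simpa using this
  have h2 : |PR φ κ f x| = Real.exp (φ x) * |∫ y, f y ∂κ x| := by
    rw [PR, abs_mul, abs_of_pos (Real.exp_pos _)]
  rw [h2]
  have h3 : Real.exp (φ x) ≤ Real.exp Cφ := Real.exp_le_exp.mpr (hCφ x)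
  have h4 : (0:ℝ) ≤ max C 0 := le_max_right _ _
  nlinarith [Real.exp_pos (φ x), abs_nonneg (∫ y, f y ∂κ x)]

lemma HypHA.int_PR (h : HypHA μ κ φ T lam g) {f : M → ℝ} (hf : BddMeas f) :
    Integrable (PR φ κ f) μ := by
  haveI := h.setup.prob
  exact integrable_of_bddR (h.bddMeas_PR hf)

lemma bddMeas_re {f : M → ℂ} (hf : BddMeasC f) : BddMeas (fun x => (f x).re) := by
  obtain ⟨hm, C, hC⟩ := hf
  exact ⟨Complex.measurable_re.comp hm, C, fun x =>
    (Complex.abs_re_le_norm (f x)).trans (by exact hC x)⟩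

lemma bddMeas_im {f : M → ℂ} (hf : BddMeasC f) : BddMeas (fun x => (f x).im) := by
  obtain ⟨hm, C, hC⟩ := hf
  exact ⟨Complex.measurable_im.comp hm, C, fun x =>
    (Complex.abs_im_le_norm (f x)).trans (by exact hC x)⟩

lemma PC_decomp (h : HypHA μ κ φ T lam g) {f : M → ℂ} (hf : BddMeasC f) :
    PC φ κ f = fun x => ((PR φ κ (fun y => (f y).re) x : ℝ) : ℂ) +
      ((PR φ κ (fun y => (f y).im) x : ℝ) : ℂ) * Complex.I := by
  funext x
  haveI := h.setup.finMeas x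
  have hint : Integrable f (κ x) := integrable_of_bddC hf
  have h1 : ∫ y, f y ∂κ x = ((∫ y, (f y).re ∂κ x : ℝ) : ℂ) +
      ((∫ y, (f y).im ∂κ x : ℝ) : ℂ) * Complex.I := by
    rw [← integral_re_add_im hint]
    norm_num
  rw [PC, PR, PR, h1]
  push_cast
  ring

lemma HypHA.cont_PC (h : HypHA μ κ φ T lam g) {f : M → ℂ} (hf : BddMeasC f) :
    Continuous (PC φ κ f) := by
  rw [PC_decomp h hf]
  exact ((Complex.continuous_ofReal.comp (h.strongFeller _ (bddMeas_re hf))).add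
    ((Complex.continuous_ofReal.comp (h.strongFeller _ (bddMeas_im hf))).mul continuous_const))

lemma HypHA.muS_pos (h : HypHA μ κ φ T lam g) : 0 < μ {x | 0 < g x} := by
  apply h.setup.fullSupp
  · exact isOpen_lt continuous_const h.g_cont
  · obtain ⟨x, hx⟩ : ∃ x, g x ≠ 0 := by
      by_contra h'; push_neg at h'; exact h.g_ne (funext h')
    exact ⟨x, lt_of_le_of_ne (h.g_nonneg x) (Ne.symm hx)⟩

lemma HypHA.intg_pos (h : HypHA μ κ φ T lam g) : 0 < ∫ x, g x ∂μ := by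
  haveI := h.setup.prob
  rw [h.g_int]
  exact ENNReal.toReal_pos h.muS_pos.ne' (measure_ne_top μ _)

lemma HypHA.int_g_kernel (h : HypHA μ κ φ T lam g) (x : M) :
    Real.exp (φ x) * ∫ y, g y ∂κ x = lam * g x := congrFun h.g_eigen x

lemma HypHA.kernel_g_zero (h : HypHA μ κ φ T lam g) {x : M} (hx : ¬ 0 < g x) :
    ∀ᵐ y ∂κ x, g y = 0 := by
  haveI := h.setup.finMeas x
  have hg0 : g x = 0 := le_antisymm (not_lt.mp hx) (h.g_nonneg x)
  have hint : ∫ y, g y ∂κ x = 0 := by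
    have h1 := h.int_g_kernel x
    rw [hg0, mul_zero] at h1
    exact (mul_eq_zero.mp h1).resolve_left (Real.exp_ne_zero _)
  have := (integral_eq_zero_iff_of_nonneg_ae (ae_of_all _ h.g_nonneg)
    (integrable_of_bddR h.bddMeas_g)).mp hint
  filter_upwards [this] with y hy using hy

/-- Normalized peripheral eigenfunction. -/
def NEig (μ : Measure M) (κ : Kernel M M) (φ : M → ℝ) (lam : ℝ) (g : M → ℝ)
    (α : ℂ) (f : M → ℂ) : Prop :=
  Measurable f ∧ (∀ x, ‖f x‖ ≤ g x) ∧ ((fun x => ‖f x‖) =ᵐ[μ] g) ∧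
    (PC φ κ f =ᵐ[μ] fun x => α * f x)

lemma HypHA.bddMeasC_of_NEig (h : HypHA μ κ φ T lam g) {α : ℂ} {f : M → ℂ}
    (hf : NEig μ κ φ lam g α f) : BddMeasC f := by
  obtain ⟨Cg, hCg⟩ := h.g_bdd
  exact ⟨hf.1, Cg, fun x => (hf.2.1 x).trans (hCg x)⟩

lemma HypHA.normalize (h : HypHA μ κ φ T lam g) {α : ℂ} (hα : PerSpec μ κ φ lam α) :
    ∃ f, NEig μ κ φ lam g α f := by
  haveI := h.setup.prob
  obtain ⟨hnorm, f₀, hb₀, hne₀, heig₀⟩ := hα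
  set n : M → ℝ := fun x => ‖f₀ x‖ with hn
  have hbn : BddMeas n := by
    obtain ⟨C, hC⟩ := hb₀.2
    exact ⟨hb₀.1.norm, C, fun x => by rw [abs_of_nonneg (norm_nonneg _)]; exact hC x⟩
  have step1 : ∀ᵐ x ∂μ, lam * n x ≤ PR φ κ n x := by
    filter_upwards [heig₀] with x hx
    have h1 : ‖PC φ κ f₀ x‖ = lam * n x := by
      rw [hx, norm_mul, hnorm]
    rw [← h1, PC, PR, norm_mul, Complex.norm_real, Real.norm_eq_abs,
      abs_of_pos (Real.exp_pos _)]
    haveI := h.setup.finMeas x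
    exact mul_le_mul_of_nonneg_left (norm_integral_le_integral_norm f₀)
      (Real.exp_pos _).le
  have int_n : Integrable n μ := integrable_of_bddR hbn
  have int_PRn : Integrable (PR φ κ n) μ := h.int_PR hbn
  have hi : ∫ x, PR φ κ n x ∂μ = lam * ∫ x, n x ∂μ := h.Pstar n hbn
  have hzero : ∫ x, (PR φ κ n x - lam * n x) ∂μ = 0 := by
    rw [integral_sub int_PRn (int_n.const_mul lam), MeasureTheory.integral_const_mul, hi,
      sub_self]
  have heqn : PR φ κ n =ᵐ[μ] fun x => lam * n x := by
    have := (integral_eq_zero_iff_of_nonneg_ae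
      (by filter_upwards [step1] with x hx
          simp only [Pi.zero_apply, Pi.sub_apply]
          linarith)
      (int_PRn.sub (int_n.const_mul lam))).mp hzero
    filter_upwards [this] with x hx
    have : PR φ κ n x - lam * n x = 0 := hx
    linarith
  obtain ⟨c, hc⟩ := h.eigen_dim n hbn heqn
  have hcpos : 0 < c := by
    rcases lt_or_ge 0 c with h' | h'
    · exact h'
    · exfalso
      apply hne₀
      filter_upwards [hc] with x hx
      have h1 : (0:ℝ) ≤ n x := norm_nonneg _
      have h2 : c * g x ≤ 0 := mul_nonpos_of_nonpos_of_nonneg h' (h.g_nonneg x)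
      have : n x = 0 := le_antisymm (hx ▸ h2) h1
      simpa [hn] using this
  set f₁ : M → ℂ := fun x => ((c⁻¹ : ℝ) : ℂ) * f₀ x with hf₁
  have hm₁ : Measurable f₁ := measurable_const.mul hb₀.1
  have hnorm₁ : ∀ x, ‖f₁ x‖ = c⁻¹ * n x := fun x => by
    rw [hf₁]
    simp only [norm_mul, Complex.norm_real, Real.norm_eq_abs,
      abs_of_pos (inv_pos.mpr hcpos)]
    rfl
  have hmod₁ : (fun x => ‖f₁ x‖) =ᵐ[μ] g := by
    filter_upwards [hc] with x hx
    rw [hnorm₁, hx]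
    field_simp
  have heig₁ : PC φ κ f₁ =ᵐ[μ] fun x => α * f₁ x := by
    have hPC1 : ∀ x, PC φ κ f₁ x = ((c⁻¹ : ℝ) : ℂ) * PC φ κ f₀ x := fun x => by
      rw [PC, PC, hf₁]
      rw [MeasureTheory.integral_const_mul]
      ring
    filter_upwards [heig₀] with x hx
    rw [hPC1, hx, hf₁]
    ring
  set f : M → ℂ := fun x => if ‖f₁ x‖ = g x then f₁ x else 0 with hfdef
  have hfm : Measurable f :=
    Measurable.ite (measurableSet_eq_fun hm₁.norm h.g_cont.measurable) hm₁ measurable_const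
  have hle : ∀ x, ‖f x‖ ≤ g x := by
    intro x
    by_cases hx : ‖f₁ x‖ = g x
    · simp only [hfdef, if_pos hx, hx, le_refl]
    · simp only [hfdef, if_neg hx, norm_zero]
      exact h.g_nonneg x
  have hae : f =ᵐ[μ] f₁ := by
    filter_upwards [hmod₁] with x hx
    simp only [hfdef, if_pos hx]
  have hmod : (fun x => ‖f x‖) =ᵐ[μ] g := by
    filter_upwards [hmod₁] with x hx
    simp only [hfdef, if_pos hx]
    exact hx
  have hPCeq : PC φ κ f = PC φ κ f₁ := by
    funext x
    rw [PC, PC]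
    congr 1
    exact integral_congr_ae (h.setup.aeKernel hae x)
  have heig : PC φ κ f =ᵐ[μ] fun x => α * f x := by
    rw [hPCeq]
    calc PC φ κ f₁ =ᵐ[μ] fun x => α * f₁ x := heig₁
      _ =ᵐ[μ] fun x => α * f x := by
          filter_upwards [hae] with x hx
          rw [hx]
  exact ⟨f, hfm, hle, hmod, heig⟩

lemma complex_eq_norm_of_re {z : ℂ} (hz : z.re = ‖z‖) : z = ((‖z‖ : ℝ) : ℂ) := by
  have h2 : z.re ^ 2 + z.im ^ 2 = ‖z‖ ^ 2 := by
    rw [Complex.sq_norm, Complex.normSq_apply]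
    ring
  have him : z.im = 0 := by
    have h3 : z.im ^ 2 = 0 := by rw [hz] at h2; linarith
    exact pow_eq_zero_iff two_ne_zero |>.mp h3
  refine Complex.ext ?_ ?_
  · simp [← hz]
  · simp [him]

lemma HypHA.key_eq_pt (h : HypHA μ κ φ T lam g) {α : ℂ} {f : M → ℂ}
    (hf : NEig μ κ φ lam g α f) (hα : ‖α‖ = lam) {x : M} (h1 : 0 < g x)
    (h2 : ‖f x‖ = g x) (h3 : PC φ κ f x = α * f x) :
    ∀ᵐ y ∂κ x, f y = α / (lam : ℂ) * (f x / (g x : ℂ)) * (g y : ℂ) := by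
  haveI := h.setup.finMeas x
  obtain ⟨hm, hle, hmod, -⟩ := hf
  obtain ⟨Cg, hCg⟩ := h.g_bdd
  have hfg : ∀ᵐ y ∂κ x, ‖f y‖ = g y := h.setup.aeKernel hmod x
  have hgx : g x ≠ 0 := ne_of_gt h1
  have hgxC : ((g x : ℝ) : ℂ) ≠ 0 := Complex.ofReal_ne_zero.mpr hgx
  have hlam : lam ≠ 0 := ne_of_gt h.lam_pos
  have hlamC : ((lam : ℝ) : ℂ) ≠ 0 := Complex.ofReal_ne_zero.mpr hlam
  have hepos : (0:ℝ) < Real.exp (φ x) := Real.exp_pos _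
  have heC : ((Real.exp (φ x) : ℝ) : ℂ) ≠ 0 := Complex.ofReal_ne_zero.mpr (ne_of_gt hepos)
  set c : ℂ := α / (lam : ℂ) * (f x / (g x : ℂ)) with hc
  have hcnorm : ‖c‖ = 1 := by
    rw [hc, norm_mul, norm_div, norm_div, Complex.norm_real, Complex.norm_real, hα, h2,
      Real.norm_eq_abs, Real.norm_eq_abs, abs_of_pos h.lam_pos, abs_of_pos h1]
    field_simp
  have hint_f : Integrable f (κ x) :=
    integrable_of_bddC ⟨hm, Cg, fun y => (hle y).trans (hCg y)⟩
  have hint_g : Integrable g (κ x) := integrable_of_bddR h.bddMeas_g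
  have hIg : ∫ y, g y ∂κ x = lam * g x / Real.exp (φ x) := by
    have h5 := h.int_g_kernel x
    rw [eq_div_iff (ne_of_gt hepos)]
    linarith [h5]
  have h3' : ((Real.exp (φ x) : ℝ) : ℂ) * ∫ y, f y ∂κ x = α * f x := h3
  have hIf : ∫ y, f y ∂κ x = α * f x / ((Real.exp (φ x) : ℝ) : ℂ) := by
    rw [eq_div_iff heC]
    linear_combination h3'
  have hcc : c * (starRingEnd ℂ) c = 1 := by
    rw [Complex.mul_conj, Complex.normSq_eq_norm_sq, hcnorm]
    norm_num
  have hkey : α * f x = c * ((lam : ℂ) * (g x : ℂ)) := by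
    rw [hc]
    field_simp
  have hconj : (starRingEnd ℂ) c * ∫ y, f y ∂κ x = ((lam * g x / Real.exp (φ x) : ℝ) : ℂ) := by
    rw [hIf, hkey]
    have h9 : (starRingEnd ℂ) c * (c * ((lam:ℂ) * (g x:ℂ)) / ((Real.exp (φ x):ℝ):ℂ))
        = (c * (starRingEnd ℂ) c) * ((lam:ℂ) * (g x:ℂ)) / ((Real.exp (φ x):ℝ):ℂ) := by ring
    rw [h9, hcc, one_mul]
    push_cast
    ring
  set ρ : M → ℝ := fun y => g y - ((starRingEnd ℂ) c * f y).re with hρ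
  have hρ_nonneg : 0 ≤ᵐ[κ x] ρ := by
    filter_upwards [hfg] with y hy
    have hre : ((starRingEnd ℂ) c * f y).re ≤ ‖(starRingEnd ℂ) c * f y‖ := by
      exact Complex.re_le_norm _
    have hn : ‖(starRingEnd ℂ) c * f y‖ = g y := by
      rw [norm_mul, RCLike.norm_conj, hcnorm, one_mul, hy]
    simp only [Pi.zero_apply, hρ]
    linarith [hre, hn.le, hn.ge]
  have hint_c : Integrable (fun y => ((starRingEnd ℂ) c * f y).re) (κ x) :=
    (hint_f.const_mul _).re
  have hint_ρ : Integrable ρ (κ x) := hint_g.sub hint_c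
  have hIρ : ∫ y, ρ y ∂κ x = 0 := by
    have h4 : ∫ y, ((starRingEnd ℂ) c * f y).re ∂κ x
        = ((starRingEnd ℂ) c * ∫ y, f y ∂κ x).re := by
      rw [← MeasureTheory.integral_const_mul]
      exact integral_re (hint_f.const_mul _)
    have h6 : ∫ y, ρ y ∂κ x = (∫ y, g y ∂κ x) - ∫ y, ((starRingEnd ℂ) c * f y).re ∂κ x :=
      integral_sub hint_g hint_c
    rw [h6, h4, hconj, hIg, Complex.ofReal_re, sub_self]
  have hρ0 : ∀ᵐ y ∂κ x, ρ y = 0 := by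
    have := (integral_eq_zero_iff_of_nonneg_ae hρ_nonneg hint_ρ).mp hIρ
    filter_upwards [this] with y hy using hy
  filter_upwards [hfg, hρ0] with y hy1 hy2
  have hn : ‖(starRingEnd ℂ) c * f y‖ = g y := by
    rw [norm_mul, RCLike.norm_conj, hcnorm, one_mul, hy1]
  have hre_eq : ((starRingEnd ℂ) c * f y).re = ‖(starRingEnd ℂ) c * f y‖ := by
    rw [hn]
    simp only [hρ] at hy2
    linarith [hy2]
  have h7 := complex_eq_norm_of_re hre_eq
  rw [hn] at h7
  have h8 : c * ((starRingEnd ℂ) c * f y) = c * ((g y : ℝ) : ℂ) := by rw [h7]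
  rw [← mul_assoc, hcc, one_mul] at h8
  exact h8

lemma HypHA.ne_ae_zero_of_mod (h : HypHA μ κ φ T lam g) {f : M → ℂ}
    (hmod : (fun x => ‖f x‖) =ᵐ[μ] g) : ¬ f =ᵐ[μ] 0 := by
  haveI := h.setup.prob
  intro hf0
  have hg0 : g =ᵐ[μ] fun _ => (0:ℝ) := by
    filter_upwards [hmod, hf0] with x hx1 hx2
    have : f x = 0 := hx2
    rw [← hx1, this, norm_zero]
  have h0 : ∫ x, g x ∂μ = 0 := by
    rw [integral_congr_ae hg0]
    simp
  linarith [h.intg_pos]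

lemma HypHA.lam_mem (h : HypHA μ κ φ T lam g) : PerSpec μ κ φ lam (lam : ℂ) := by
  obtain ⟨Cg, hCg⟩ := h.g_bdd
  have hmod : (fun x => ‖((g x : ℝ) : ℂ)‖) =ᵐ[μ] g := by
    apply ae_of_all
    intro x
    simp only [Complex.norm_real, Real.norm_eq_abs]
    exact abs_of_nonneg (h.g_nonneg x)
  refine ⟨by rw [Complex.norm_real, Real.norm_eq_abs, abs_of_pos h.lam_pos],
    fun x => ((g x : ℝ) : ℂ),
    ⟨Complex.measurable_ofReal.comp h.g_cont.measurable, Cg, fun x => by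
      simp only [Complex.norm_real, Real.norm_eq_abs]
      rw [abs_of_nonneg (h.g_nonneg x)]
      exact hCg x⟩,
    h.ne_ae_zero_of_mod hmod, ?_⟩
  apply ae_of_all
  intro x
  haveI := h.setup.finMeas x
  have hio : ∫ y, ((g y : ℝ):ℂ) ∂κ x = ((∫ y, g y ∂κ x : ℝ) : ℂ) := integral_ofReal
  have h5 : PC φ κ (fun y => ((g y : ℝ):ℂ)) x = ((PR φ κ g x : ℝ) : ℂ) := by
    rw [PC, PR, hio]
    push_cast
    ring
  rw [h5, congrFun h.g_eigen x]
  push_cast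
  ring

lemma HypHA.prod_mem (h : HypHA μ κ φ T lam g) {α₁ α₂ : ℂ}
    (h1 : PerSpec μ κ φ lam α₁) (h2 : PerSpec μ κ φ lam α₂) :
    PerSpec μ κ φ lam (α₁ * (starRingEnd ℂ) α₂ / (lam : ℂ)) := by
  obtain ⟨Cg, hCg⟩ := h.g_bdd
  have hn1 := h1.1
  have hn2 := h2.1
  have hlam : lam ≠ 0 := ne_of_gt h.lam_pos
  have hlamC : ((lam : ℝ) : ℂ) ≠ 0 := Complex.ofReal_ne_zero.mpr hlam
  obtain ⟨f₁, hf₁⟩ := h.normalize h1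
  obtain ⟨f₂, hf₂⟩ := h.normalize h2
  have hSmeas : MeasurableSet {y | 0 < g y} :=
    measurableSet_lt measurable_const h.g_cont.measurable
  set q : M → ℂ :=
    fun y => if 0 < g y then f₁ y * (starRingEnd ℂ) (f₂ y) / ((g y : ℝ) : ℂ) else 0 with hq
  have hqm : Measurable q := by
    apply Measurable.ite hSmeas
    · exact (hf₁.1.mul (Complex.continuous_conj.measurable.comp hf₂.1)).div
        (Complex.measurable_ofReal.comp h.g_cont.measurable)
    · exact measurable_const
  have hqle : ∀ y, ‖q y‖ ≤ g y := by
    intro y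
    by_cases hy : 0 < g y
    · simp only [hq, if_pos hy]
      rw [norm_div, norm_mul, RCLike.norm_conj, Complex.norm_real, Real.norm_eq_abs,
        abs_of_pos hy, div_le_iff₀ hy]
      exact mul_le_mul (hf₁.2.1 y) (hf₂.2.1 y) (norm_nonneg _) (h.g_nonneg y)
    · simp only [hq, if_neg hy, norm_zero]
      exact h.g_nonneg y
  have hqmod : (fun y => ‖q y‖) =ᵐ[μ] g := by
    filter_upwards [hf₁.2.2.1, hf₂.2.2.1] with y hy1 hy2
    by_cases hy : 0 < g y
    · simp only [hq, if_pos hy]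
      rw [norm_div, norm_mul, RCLike.norm_conj, Complex.norm_real, Real.norm_eq_abs,
        abs_of_pos hy, hy1, hy2]
      field_simp
    · have hy0 : g y = 0 := le_antisymm (not_lt.mp hy) (h.g_nonneg y)
      simp only [hq, if_neg hy, norm_zero, hy0]
  have heig : PC φ κ q =ᵐ[μ] fun x => (α₁ * (starRingEnd ℂ) α₂ / (lam:ℂ)) * q x := by
    filter_upwards [hf₁.2.2.1, hf₁.2.2.2, hf₂.2.2.1, hf₂.2.2.2] with x hx1 hx2 hx3 hx4
    haveI := h.setup.finMeas x
    by_cases hgx : 0 < g x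
    · have hgxC : ((g x : ℝ) : ℂ) ≠ 0 := Complex.ofReal_ne_zero.mpr (ne_of_gt hgx)
      have k₁ := h.key_eq_pt hf₁ hn1 hgx hx1 hx2
      have k₂ := h.key_eq_pt hf₂ hn2 hgx hx3 hx4
      set c₁ : ℂ := α₁ / (lam:ℂ) * (f₁ x / (g x : ℂ)) with hc₁
      set c₂ : ℂ := α₂ / (lam:ℂ) * (f₂ x / (g x : ℂ)) with hc₂
      have hker : ∀ᵐ y ∂κ x, q y = (c₁ * (starRingEnd ℂ) c₂) * ((g y : ℝ) : ℂ) := by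
        filter_upwards [k₁, k₂] with y hy1 hy2
        by_cases hgy : 0 < g y
        · have hgyC : ((g y:ℝ):ℂ) ≠ 0 := Complex.ofReal_ne_zero.mpr (ne_of_gt hgy)
          simp only [hq, if_pos hgy, hy1, hy2]
          rw [map_mul, Complex.conj_ofReal]
          field_simp
        · have hgy0 : g y = 0 := le_antisymm (not_lt.mp hgy) (h.g_nonneg y)
          simp only [hq, if_neg hgy, hgy0]
          push_cast
          ring
      have hPCq : PC φ κ q x = ((Real.exp (φ x):ℝ):ℂ) *
          ((c₁ * (starRingEnd ℂ) c₂) * ((∫ y, g y ∂κ x : ℝ) : ℂ)) := by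
        have hio : ∫ y, ((g y : ℝ):ℂ) ∂κ x = ((∫ y, g y ∂κ x : ℝ) : ℂ) := integral_ofReal
        rw [PC, integral_congr_ae hker, MeasureTheory.integral_const_mul, hio]
      have he' := h.int_g_kernel x
      have he : ((Real.exp (φ x):ℝ):ℂ) * ((∫ y, g y ∂κ x : ℝ) : ℂ)
          = (lam:ℂ) * ((g x:ℝ):ℂ) := by
        exact_mod_cast congrArg Complex.ofReal he'
      have h10 : PC φ κ q x = (c₁ * (starRingEnd ℂ) c₂) * ((lam:ℂ) * ((g x:ℝ):ℂ)) := by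
        rw [hPCq, ← he]
        ring
      rw [h10]
      simp only [hq, if_pos hgx, hc₁, hc₂]
      rw [map_mul, map_div₀, map_div₀, Complex.conj_ofReal, Complex.conj_ofReal]
      field_simp
    · have hker : ∀ᵐ y ∂κ x, q y = 0 := by
        filter_upwards [h.kernel_g_zero hgx] with y hy
        have hy' : ¬ 0 < g y := by rw [hy]; exact lt_irrefl 0
        simp [hq, if_neg hy']
      have h11 : PC φ κ q x = 0 := by
        rw [PC, integral_congr_ae hker]
        simp
      rw [h11]
      simp [hq, if_neg hgx]
  refine ⟨?_, q, ⟨hqm, Cg, fun y => (hqle y).trans (hCg y)⟩, h.ne_ae_zero_of_mod hqmod, heig⟩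
  rw [norm_div, norm_mul, RCLike.norm_conj, hn1, hn2, Complex.norm_real, Real.norm_eq_abs,
    abs_of_pos h.lam_pos]
  field_simp

/-- Level sets (cyclic pieces) of a normalized eigenfunction. -/
def Aset (lam : ℝ) (g : M → ℝ) (α : ℂ) (f : M → ℂ) (x₀ : M) (n : ℕ) : Set M :=
  {y | 0 < g y ∧ f y = (α / (lam:ℂ))^n * (f x₀ / (g x₀ : ℂ)) * (g y : ℂ)}

lemma mem_Aset {lam : ℝ} {g : M → ℝ} {α : ℂ} {f : M → ℂ} {x₀ y : M} {n : ℕ} :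
    y ∈ Aset lam g α f x₀ n ↔
      0 < g y ∧ f y = (α / (lam:ℂ))^n * (f x₀ / (g x₀ : ℂ)) * (g y : ℂ) := Iff.rfl

lemma Aset_measurable {lam : ℝ} {g : M → ℝ} {α : ℂ} {f : M → ℂ} (hfm : Measurable f)
    (hgm : Measurable g) (x₀ : M) (n : ℕ) : MeasurableSet (Aset lam g α f x₀ n) := by
  have h0 : Aset lam g α f x₀ n = {y | 0 < g y} ∩
      {y | f y = (α / (lam:ℂ))^n * (f x₀ / (g x₀ : ℂ)) * (g y : ℂ)} := rfl
  rw [h0]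
  exact (measurableSet_lt measurable_const hgm).inter
    (measurableSet_eq_fun hfm (measurable_const.mul (Complex.measurable_ofReal.comp hgm)))

lemma HypHA.bddMeas_indicator (h : HypHA μ κ φ T lam g) {A : Set M} (hA : MeasurableSet A) :
    BddMeas (A.indicator g) := by
  obtain ⟨Cg, hCg⟩ := h.g_bdd
  refine ⟨h.g_cont.measurable.indicator hA, max Cg 0, fun x => ?_⟩
  by_cases hx : x ∈ A
  · rw [Set.indicator_of_mem hx, abs_of_nonneg (h.g_nonneg x)]
    exact (hCg x).trans (le_max_left _ _)
  · rw [Set.indicator_of_notMem hx, abs_zero]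
    exact le_max_right _ _

lemma HypHA.omega_ne (h : HypHA μ κ φ T lam g) {α : ℂ} (hα : ‖α‖ = lam) :
    α / (lam:ℂ) ≠ 0 := by
  have hlam : lam ≠ 0 := ne_of_gt h.lam_pos
  have hαne : α ≠ 0 := by
    intro h0; rw [h0, norm_zero] at hα; exact hlam hα.symm
  exact div_ne_zero hαne (Complex.ofReal_ne_zero.mpr hlam)

lemma HypHA.J_succ (h : HypHA μ κ φ T lam g) {α : ℂ} {f : M → ℂ}
    (hf : NEig μ κ φ lam g α f) (hα : ‖α‖ = lam) (x₀ : M) (n : ℕ) :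
    ∫ y, (Aset lam g α f x₀ (n+1)).indicator g y ∂μ
      = ∫ y, (Aset lam g α f x₀ n).indicator g y ∂μ := by
  haveI := h.setup.prob
  have hlam : lam ≠ 0 := ne_of_gt h.lam_pos
  have hω : α / (lam:ℂ) ≠ 0 := h.omega_ne hα
  have hAm : ∀ m, MeasurableSet (Aset lam g α f x₀ m) := fun m =>
    Aset_measurable hf.1 h.g_cont.measurable x₀ m
  have hPR : PR φ κ ((Aset lam g α f x₀ (n+1)).indicator g)
      =ᵐ[μ] fun x => lam * (Aset lam g α f x₀ n).indicator g x := by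
    filter_upwards [hf.2.2.1, hf.2.2.2] with x hx1 hx2
    haveI := h.setup.finMeas x
    by_cases hgx : 0 < g x
    · have hgxC : ((g x:ℝ):ℂ) ≠ 0 := Complex.ofReal_ne_zero.mpr (ne_of_gt hgx)
      have k := h.key_eq_pt hf hα hgx hx1 hx2
      have hker : ∀ᵐ y ∂κ x, (Aset lam g α f x₀ (n+1)).indicator g y
          = (Aset lam g α f x₀ n).indicator (fun _ => (1:ℝ)) x * g y := by
        filter_upwards [k] with y hy
        by_cases hgy : 0 < g y
        · have hgyC : ((g y:ℝ):ℂ) ≠ 0 := Complex.ofReal_ne_zero.mpr (ne_of_gt hgy)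
          by_cases hxA : x ∈ Aset lam g α f x₀ n
          · have hyA : y ∈ Aset lam g α f x₀ (n+1) := by
              refine mem_Aset.mpr ⟨hgy, ?_⟩
              rw [hy, (mem_Aset.mp hxA).2, mul_div_cancel_right₀ _ hgxC, pow_succ]
              ring
            rw [Set.indicator_of_mem hyA, Set.indicator_of_mem hxA, one_mul]
          · have hyA : y ∉ Aset lam g α f x₀ (n+1) := by
              intro hyA
              apply hxA
              refine mem_Aset.mpr ⟨hgx, ?_⟩
              have h9 := (mem_Aset.mp hyA).2
              rw [hy] at h9
              have h10 : α/(lam:ℂ) * (f x / (g x:ℂ))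
                  = (α/(lam:ℂ))^(n+1) * (f x₀/(g x₀:ℂ)) :=
                mul_right_cancel₀ hgyC h9
              have h11 : f x / (g x:ℂ) = (α/(lam:ℂ))^n * (f x₀/(g x₀:ℂ)) := by
                apply mul_left_cancel₀ hω
                rw [h10, pow_succ]
                ring
              have h12 : f x = (α/(lam:ℂ))^n * (f x₀/(g x₀:ℂ)) * (g x:ℂ) := by
                rw [← h11]
                exact (div_mul_cancel₀ _ hgxC).symm
              exact h12
            rw [Set.indicator_of_notMem hyA, Set.indicator_of_notMem hxA, zero_mul]
        · have hgy0 : g y = 0 := le_antisymm (not_lt.mp hgy) (h.g_nonneg y)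
          have hz : (Aset lam g α f x₀ (n+1)).indicator g y = 0 := by
            by_cases hyA : y ∈ Aset lam g α f x₀ (n+1)
            · rw [Set.indicator_of_mem hyA]; exact hgy0
            · exact Set.indicator_of_notMem hyA g
          rw [hz, hgy0, mul_zero]
      rw [PR, integral_congr_ae hker, MeasureTheory.integral_const_mul]
      have h5 := h.int_g_kernel x
      by_cases hxA : x ∈ Aset lam g α f x₀ n
      · rw [Set.indicator_of_mem hxA, Set.indicator_of_mem hxA, one_mul]
        exact h5
      · rw [Set.indicator_of_notMem hxA, Set.indicator_of_notMem hxA]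
        simp
    · have hker : ∀ᵐ y ∂κ x, (Aset lam g α f x₀ (n+1)).indicator g y = 0 := by
        filter_upwards [h.kernel_g_zero hgx] with y hy
        by_cases hyA : y ∈ Aset lam g α f x₀ (n+1)
        · rw [Set.indicator_of_mem hyA]; exact hy
        · exact Set.indicator_of_notMem hyA g
      rw [PR, integral_congr_ae hker]
      have hxA : x ∉ Aset lam g α f x₀ n := fun hxA => hgx (mem_Aset.mp hxA).1
      rw [Set.indicator_of_notMem hxA]
      simp
  have hP := h.Pstar _ (h.bddMeas_indicator (hAm (n+1)))
  rw [integral_congr_ae hPR, MeasureTheory.integral_const_mul] at hP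
  exact (mul_left_cancel₀ hlam hP).symm

lemma HypHA.J_one_pos (h : HypHA μ κ φ T lam g) {α : ℂ} {f : M → ℂ}
    (hf : NEig μ κ φ lam g α f) (hα : ‖α‖ = lam) {x₀ : M} (h1 : 0 < g x₀)
    (h2 : ‖f x₀‖ = g x₀) (h3 : PC φ κ f x₀ = α * f x₀) :
    0 < ∫ y, (Aset lam g α f x₀ 1).indicator g y ∂μ := by
  haveI := h.setup.prob
  haveI := h.setup.finMeas x₀
  have hAm : MeasurableSet (Aset lam g α f x₀ 1) :=
    Aset_measurable hf.1 h.g_cont.measurable x₀ 1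
  have k := h.key_eq_pt hf hα h1 h2 h3
  have hker : ∀ᵐ y ∂κ x₀, (Aset lam g α f x₀ 1).indicator g y = g y := by
    filter_upwards [k] with y hy
    by_cases hgy : 0 < g y
    · have hyA : y ∈ Aset lam g α f x₀ 1 := mem_Aset.mpr ⟨hgy, by rw [hy, pow_one]⟩
      rw [Set.indicator_of_mem hyA]
    · have hgy0 : g y = 0 := le_antisymm (not_lt.mp hgy) (h.g_nonneg y)
      by_cases hyA : y ∈ Aset lam g α f x₀ 1
      · rw [Set.indicator_of_mem hyA]
      · rw [Set.indicator_of_notMem hyA, hgy0]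
  have hpos : 0 < ∫ y, (Aset lam g α f x₀ 1).indicator g y ∂κ x₀ := by
    rw [integral_congr_ae hker]
    have h5 := h.int_g_kernel x₀
    have h6 : ∫ y, g y ∂κ x₀ = lam * g x₀ / Real.exp (φ x₀) := by
      rw [eq_div_iff (Real.exp_pos _).ne']
      linarith
    rw [h6]
    exact div_pos (mul_pos h.lam_pos h1) (Real.exp_pos _)
  by_contra hcon
  push_neg at hcon
  have hnn : (0:ℝ) ≤ ∫ y, (Aset lam g α f x₀ 1).indicator g y ∂μ :=
    integral_nonneg (fun y => Set.indicator_nonneg (fun z _ => h.g_nonneg z) y)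
  have hzero : ∫ y, (Aset lam g α f x₀ 1).indicator g y ∂μ = 0 := le_antisymm hcon hnn
  have hae0 : (Aset lam g α f x₀ 1).indicator g =ᵐ[μ] 0 := by
    have := (integral_eq_zero_iff_of_nonneg_ae
      (ae_of_all _ (fun y => Set.indicator_nonneg (fun z _ => h.g_nonneg z) y))
      (integrable_of_bddR (h.bddMeas_indicator hAm))).mp hzero
    filter_upwards [this] with y hy using hy
  have h7 : ∫ y, (Aset lam g α f x₀ 1).indicator g y ∂κ x₀ = 0 := by
    rw [integral_congr_ae (h.setup.aeKernel hae0 x₀)]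
    simp
  rw [h7] at hpos
  exact lt_irrefl 0 hpos

lemma pow_inj_window {ω : ℂ} (hω : ω ≠ 0) {B : ℕ} (hno : ∀ N, 0 < N → N ≤ B → ω^N ≠ 1) :
    ∀ a b, a ≤ B → b ≤ B → ω^a = ω^b → a = b := by
  have key : ∀ a b, a ≤ B → b ≤ B → a < b → ω^a = ω^b → False := by
    intro a b ha hb hab he
    apply hno (b - a) (by omega) (by omega)
    have h1 : ω^a * ω^(b-a) = ω^a * 1 := by
      rw [← pow_add, mul_one, show a + (b-a) = b by omega, ← he]
    exact mul_left_cancel₀ (pow_ne_zero a hω) h1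
  intro a b ha hb he
  rcases lt_trichotomy a b with hc|hc|hc
  · exact absurd he (fun he' => (key a b ha hb hc he'))
  · exact hc
  · exact ((key b a hb ha hc he.symm).elim)

lemma HypHA.N_bound (h : HypHA μ κ φ T lam g) {α : ℂ} {f : M → ℂ}
    (hf : NEig μ κ φ lam g α f) (hα : ‖α‖ = lam) {x₀ : M} (h1 : 0 < g x₀)
    (h2 : ‖f x₀‖ = g x₀) (N : ℕ)
    (hinj : ∀ a b, a ≤ N → b ≤ N → (α/(lam:ℂ))^a = (α/(lam:ℂ))^b → a = b) :
    (N : ℝ) * ∫ y, (Aset lam g α f x₀ 1).indicator g y ∂μ ≤ ∫ y, g y ∂μ := by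
  haveI := h.setup.prob
  have hgx₀C : ((g x₀:ℝ):ℂ) ≠ 0 := Complex.ofReal_ne_zero.mpr (ne_of_gt h1)
  have hfx₀ : f x₀ ≠ 0 := by
    intro h0
    rw [h0, norm_zero] at h2
    exact (ne_of_gt h1) h2.symm
  have hc₀ : f x₀ / ((g x₀:ℝ):ℂ) ≠ 0 := div_ne_zero hfx₀ hgx₀C
  have hAm : ∀ m, MeasurableSet (Aset lam g α f x₀ m) := fun m =>
    Aset_measurable hf.1 h.g_cont.measurable x₀ m
  have hJall : ∀ n, ∫ y, (Aset lam g α f x₀ (n+1)).indicator g y ∂μ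
      = ∫ y, (Aset lam g α f x₀ 1).indicator g y ∂μ := by
    intro n
    induction n with
    | zero => rfl
    | succ m ih => rw [h.J_succ hf hα x₀ (m+1)]; exact ih
  have hpt : ∀ y, (∑ n ∈ Finset.range N, (Aset lam g α f x₀ (n+1)).indicator g y) ≤ g y := by
    intro y
    by_cases hy : ∃ n ∈ Finset.range N, y ∈ Aset lam g α f x₀ (n+1)
    · obtain ⟨n₀, hn₀, hy₀⟩ := hy
      have hsum : ∑ n ∈ Finset.range N, (Aset lam g α f x₀ (n+1)).indicator g y
          = (Aset lam g α f x₀ (n₀+1)).indicator g y := by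
        apply Finset.sum_eq_single_of_mem n₀ hn₀
        intro m hm hmne
        apply Set.indicator_of_notMem
        intro hym
        have hgy : 0 < g y := (mem_Aset.mp hym).1
        have hgyC : ((g y:ℝ):ℂ) ≠ 0 := Complex.ofReal_ne_zero.mpr (ne_of_gt hgy)
        have he1 := (mem_Aset.mp hym).2
        have he2 := (mem_Aset.mp hy₀).2
        rw [he2] at he1
        have he3 : (α/(lam:ℂ))^(n₀+1) * (f x₀/((g x₀:ℝ):ℂ))
            = (α/(lam:ℂ))^(m+1) * (f x₀/((g x₀:ℝ):ℂ)) := mul_right_cancel₀ hgyC he1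
        have he4 : (α/(lam:ℂ))^(n₀+1) = (α/(lam:ℂ))^(m+1) := mul_right_cancel₀ hc₀ he3
        have := hinj (n₀+1) (m+1) (by simpa using Finset.mem_range.mp hn₀)
          (by simpa using Finset.mem_range.mp hm) he4
        omega
      rw [hsum]
      exact Set.indicator_le_self' (fun z _ => h.g_nonneg z) y
    · push_neg at hy
      have : ∀ n ∈ Finset.range N, (Aset lam g α f x₀ (n+1)).indicator g y = 0 :=
        fun n hn => Set.indicator_of_notMem (hy n hn) g
      rw [Finset.sum_congr rfl this]
      simp [h.g_nonneg y]
  have hint : ∀ n ∈ Finset.range N, Integrable ((Aset lam g α f x₀ (n+1)).indicator g) μ :=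
    fun n _ => integrable_of_bddR (h.bddMeas_indicator (hAm (n+1)))
  have hmono := integral_mono (integrable_finset_sum _ hint)
    (integrable_of_bddR h.bddMeas_g) hpt
  rw [integral_finset_sum _ hint] at hmono
  calc (N : ℝ) * ∫ y, (Aset lam g α f x₀ 1).indicator g y ∂μ
      = ∑ n ∈ Finset.range N, ∫ y, (Aset lam g α f x₀ (n+1)).indicator g y ∂μ := by
        rw [Finset.sum_congr rfl (fun n _ => hJall n)]
        simp [Finset.sum_const, nsmul_eq_mul]
    _ ≤ ∫ y, g y ∂μ := hmono

lemma HypHA.exists_good (h : HypHA μ κ φ T lam g) {p : M → Prop} (hp : ∀ᵐ x ∂μ, p x) :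
    ∃ x₀, 0 < g x₀ ∧ p x₀ := by
  haveI := h.setup.prob
  set S := {x | 0 < g x} with hS
  set B := {x | ¬ p x} with hB
  have hBnull : μ B = 0 := hp
  have hsub : S ⊆ (S \ B) ∪ B := fun x hx => by
    by_cases hxB : x ∈ B
    · exact Or.inr hxB
    · exact Or.inl ⟨hx, hxB⟩
  have hle : μ S ≤ μ (S \ B) + μ B := le_trans (measure_mono hsub) (measure_union_le _ _)
  rw [hBnull, add_zero] at hle
  have hpos : 0 < μ (S \ B) := lt_of_lt_of_le h.muS_pos hle
  obtain ⟨x₀, hx₀⟩ := nonempty_of_measure_ne_zero hpos.ne'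
  exact ⟨x₀, hx₀.1, not_not.mp hx₀.2⟩

lemma HypHA.torsion (h : HypHA μ κ φ T lam g) {α : ℂ} (hα : PerSpec μ κ φ lam α) :
    ∃ N, 0 < N ∧ (α/(lam:ℂ))^N = 1 := by
  haveI := h.setup.prob
  by_contra hcon
  push_neg at hcon
  obtain ⟨f, hf⟩ := h.normalize hα
  obtain ⟨x₀, h1, h2, h3⟩ := h.exists_good (hf.2.2.1.and hf.2.2.2)
  have hJpos := h.J_one_pos hf hα.1 h1 h2 h3
  obtain ⟨N, hN⟩ := exists_nat_gt ((∫ y, g y ∂μ) / ∫ y, (Aset lam g α f x₀ 1).indicator g y ∂μ)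
  have hinj : ∀ a b, a ≤ N → b ≤ N → (α/(lam:ℂ))^a = (α/(lam:ℂ))^b → a = b :=
    pow_inj_window (h.omega_ne hα.1) (fun m hm _ => hcon m hm)
  have hbd := h.N_bound hf hα.1 h1 h2 N hinj
  rw [div_lt_iff₀ hJpos] at hN
  linarith

lemma HypHA.bounded_order (h : HypHA μ κ φ T lam g) :
    ∃ B : ℕ, 0 < B ∧ ∀ α : ℂ, PerSpec μ κ φ lam α → (α/(lam:ℂ))^B = 1 := by
  haveI := h.setup.prob
  by_contra hcon
  push_neg at hcon
  have hsel : ∀ i : ℕ, ∃ α : ℂ, PerSpec μ κ φ lam α ∧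
      ∀ N, 0 < N → N ≤ i → (α/(lam:ℂ))^N ≠ 1 := by
    intro i
    obtain ⟨α, hα, hne⟩ := hcon (Nat.factorial i) (Nat.factorial_pos i)
    refine ⟨α, hα, fun N hN hNi hcontra => hne ?_⟩
    obtain ⟨m, hm⟩ := Nat.dvd_factorial hN hNi
    rw [hm, pow_mul, hcontra, one_pow]
  choose αs hαs hord using hsel
  choose fs hfs using fun i => h.normalize (hαs i)
  have hae : ∀ᵐ x ∂μ, ∀ i : ℕ,
      (‖fs i x‖ = g x ∧ PC φ κ (fs i) x = αs i * (fs i x)) :=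
    ae_all_iff.mpr (fun i => ((hfs i).2.2.1.and (hfs i).2.2.2))
  obtain ⟨x₀, h1, hgood⟩ := h.exists_good hae
  haveI := h.setup.finMeas x₀
  set D : Set M := ⋂ i : ℕ, Aset lam g (αs i) (fs i) x₀ 1 with hD
  have hDmeas : MeasurableSet D :=
    MeasurableSet.iInter (fun i => Aset_measurable (hfs i).1 h.g_cont.measurable x₀ 1)
  have hker : ∀ᵐ y ∂κ x₀, D.indicator g y = g y := by
    have hkeys : ∀ᵐ y ∂κ x₀, ∀ i : ℕ, fs i y
        = (αs i)/(lam:ℂ) * (fs i x₀ / ((g x₀:ℝ):ℂ)) * ((g y:ℝ):ℂ) :=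
      ae_all_iff.mpr (fun i =>
        h.key_eq_pt (hfs i) (hαs i).1 h1 (hgood i).1 (hgood i).2)
    filter_upwards [hkeys] with y hy
    by_cases hgy : 0 < g y
    · have hyD : y ∈ D := Set.mem_iInter.mpr (fun i =>
        mem_Aset.mpr ⟨hgy, by rw [hy i, pow_one]⟩)
      rw [Set.indicator_of_mem hyD]
    · have hgy0 : g y = 0 := le_antisymm (not_lt.mp hgy) (h.g_nonneg y)
      by_cases hyD : y ∈ D
      · rw [Set.indicator_of_mem hyD]
      · rw [Set.indicator_of_notMem hyD, hgy0]
  have hnn : (0:ℝ) ≤ ∫ y, D.indicator g y ∂μ :=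
    integral_nonneg (fun y => Set.indicator_nonneg (fun z _ => h.g_nonneg z) y)
  have hub : ∀ i : ℕ, 0 < i → ∫ y, D.indicator g y ∂μ ≤ (∫ y, g y ∂μ) / i := by
    intro i hi
    have hinj : ∀ a b, a ≤ i → b ≤ i →
        ((αs i)/(lam:ℂ))^a = ((αs i)/(lam:ℂ))^b → a = b :=
      pow_inj_window (h.omega_ne (hαs i).1) (hord i)
    have hNb := h.N_bound (hfs i) (hαs i).1 h1 (hgood i).1 i hinj
    have hmono : ∫ y, D.indicator g y ∂μ
        ≤ ∫ y, (Aset lam g (αs i) (fs i) x₀ 1).indicator g y ∂μ := by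
      apply integral_mono (integrable_of_bddR (h.bddMeas_indicator hDmeas))
        (integrable_of_bddR (h.bddMeas_indicator
          (Aset_measurable (hfs i).1 h.g_cont.measurable x₀ 1)))
      exact Set.indicator_le_indicator_of_subset (Set.iInter_subset _ i)
        (fun z => h.g_nonneg z)
    rw [le_div_iff₀ (by exact_mod_cast hi : (0:ℝ) < (i:ℝ))]
    calc (∫ y, D.indicator g y ∂μ) * i
        ≤ (∫ y, (Aset lam g (αs i) (fs i) x₀ 1).indicator g y ∂μ) * i := by
          apply mul_le_mul_of_nonneg_right hmono (by positivity)
      _ = (i:ℝ) * ∫ y, (Aset lam g (αs i) (fs i) x₀ 1).indicator g y ∂μ := by ring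
      _ ≤ ∫ y, g y ∂μ := hNb
  have hμ0 : ∫ y, D.indicator g y ∂μ = 0 := by
    by_contra hne
    have hpos : 0 < ∫ y, D.indicator g y ∂μ := lt_of_le_of_ne hnn (Ne.symm hne)
    obtain ⟨i, hi⟩ := exists_nat_gt ((∫ y, g y ∂μ) / ∫ y, D.indicator g y ∂μ)
    have hi1 : 0 < i := by
      by_contra hi0
      push_neg at hi0
      interval_cases i
      · simp only [Nat.cast_zero] at hi
        have := div_pos h.intg_pos hpos
        linarith
    have := hub i hi1
    rw [div_lt_iff₀ hpos] at hi
    have h13 : (∫ y, g y ∂μ) / i < ∫ y, D.indicator g y ∂μ := by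
      rw [div_lt_iff₀ (by exact_mod_cast hi1 : (0:ℝ) < (i:ℝ))]
      linarith
    linarith
  have hae0 : D.indicator g =ᵐ[μ] 0 := by
    have := (integral_eq_zero_iff_of_nonneg_ae
      (ae_of_all _ (fun y => Set.indicator_nonneg (fun z _ => h.g_nonneg z) y))
      (integrable_of_bddR (h.bddMeas_indicator hDmeas))).mp hμ0
    filter_upwards [this] with y hy using hy
  have h6 : ∫ y, D.indicator g y ∂κ x₀ = 0 := by
    rw [integral_congr_ae (h.setup.aeKernel hae0 x₀)]
    simp
  have h7 : ∫ y, D.indicator g y ∂κ x₀ = ∫ y, g y ∂κ x₀ := integral_congr_ae hker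
  have h5 := h.int_g_kernel x₀
  have h8 : ∫ y, g y ∂κ x₀ = lam * g x₀ / Real.exp (φ x₀) := by
    rw [eq_div_iff (Real.exp_pos _).ne']
    linarith
  rw [h7, h8] at h6
  have h9 : (0:ℝ) < lam * g x₀ / Real.exp (φ x₀) :=
    div_pos (mul_pos h.lam_pos h1) (Real.exp_pos _)
  linarith

lemma HypHA.perspec_iff_mem (h : HypHA μ κ φ T lam g) (α : ℂ) :
    PerSpec μ κ φ lam α ↔ PerSpec μ κ φ lam ((lam:ℂ) * (α / (lam:ℂ))) := by
  have hlam : lam ≠ 0 := ne_of_gt h.lam_pos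
  have hlamC : ((lam:ℝ):ℂ) ≠ 0 := Complex.ofReal_ne_zero.mpr hlam
  have he : (lam:ℂ) * (α / (lam:ℂ)) = α := by field_simp
  rw [he]

end Aux
/-- **Lemma A.2.** Under Hypothesis (HA), there is `k ≥ 1` such that the point
peripheral spectrum of `P` is exactly `{lam e^{2πi j/k} : j = 0, …, k-1}`. -/
theorem statement3 (μ : Measure M) (κ : Kernel M M) (φ : M → ℝ)
    (T : Lp ℂ ⊤ μ →L[ℂ] Lp ℂ ⊤ μ) (lam : ℝ) (g : M → ℝ)
    (hHA : HypHA μ κ φ T lam g) :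
    ∃ k : ℕ, 1 ≤ k ∧ PerSpecEq μ κ φ lam k := by
  have h := hHA
  haveI := h.setup.prob
  have hlam : lam ≠ 0 := ne_of_gt h.lam_pos
  have hlamC : ((lam:ℝ):ℂ) ≠ 0 := Complex.ofReal_ne_zero.mpr hlam
  set Ω : Set ℂ := {ω | PerSpec μ κ φ lam ((lam:ℂ) * ω)} with hΩ
  have hmem_iff : ∀ α : ℂ, PerSpec μ κ φ lam α ↔ (α / (lam:ℂ)) ∈ Ω := fun α =>
    h.perspec_iff_mem α
  have hnormΩ : ∀ ω ∈ Ω, ‖ω‖ = 1 := by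
    intro ω hω
    have h2 : ‖(lam:ℂ) * ω‖ = lam := (show PerSpec μ κ φ lam ((lam:ℂ) * ω) from hω).1
    rw [norm_mul, Complex.norm_real, Real.norm_eq_abs, abs_of_pos h.lam_pos] at h2
    exact mul_left_cancel₀ hlam (by rw [h2, mul_one])
  have h1Ω : (1:ℂ) ∈ Ω := by
    show PerSpec μ κ φ lam ((lam:ℂ) * 1)
    rw [mul_one]
    exact h.lam_mem
  have hconjΩ : ∀ ω ∈ Ω, (starRingEnd ℂ) ω ∈ Ω := by
    intro ω hω
    have h2 := h.prod_mem h.lam_mem (show PerSpec μ κ φ lam ((lam:ℂ) * ω) from hω)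
    have he : ((lam:ℝ):ℂ) * (starRingEnd ℂ) ((lam:ℂ)*ω) / ((lam:ℝ):ℂ)
        = (lam:ℂ) * (starRingEnd ℂ) ω := by
      rw [map_mul, Complex.conj_ofReal]
      field_simp
    rw [he] at h2
    exact h2
  have hmulΩ : ∀ ω ∈ Ω, ∀ ω' ∈ Ω, ω * ω' ∈ Ω := by
    intro ω hω ω' hω'
    have hc := hconjΩ ω' hω'
    have h2 := h.prod_mem (show PerSpec μ κ φ lam ((lam:ℂ) * ω) from hω)
      (show PerSpec μ κ φ lam ((lam:ℂ) * (starRingEnd ℂ) ω') from hc)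
    have he : ((lam:ℂ)*ω) * (starRingEnd ℂ) ((lam:ℂ)*(starRingEnd ℂ) ω') / ((lam:ℝ):ℂ)
        = (lam:ℂ) * (ω * ω') := by
      rw [map_mul, Complex.conj_ofReal, Complex.conj_conj]
      field_simp
    rw [he] at h2
    exact h2
  obtain ⟨B, hB, hBall⟩ := h.bounded_order
  have hpowB : ∀ ω ∈ Ω, ω^B = 1 := by
    intro ω hω
    have h2 := hBall _ (show PerSpec μ κ φ lam ((lam:ℂ) * ω) from hω)
    have he : ((lam:ℂ)*ω)/((lam:ℝ):ℂ) = ω := by field_simp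
    rwa [he] at h2
  have hΩsub : Ω ⊆ ↑(Polynomial.nthRootsFinset B (1:ℂ)) := by
    intro ω hω
    rw [Finset.mem_coe, Polynomial.mem_nthRootsFinset hB (1:ℂ)]
    exact hpowB ω hω
  have hΩfin : Ω.Finite :=
    Set.Finite.subset (Polynomial.nthRootsFinset B (1:ℂ)).finite_toSet hΩsub
  have hne0 : ∀ ω ∈ Ω, ω ≠ 0 := by
    intro ω hω h0
    have h2 := hnormΩ ω hω
    rw [h0, norm_zero] at h2
    norm_num at h2
  set G' : Subgroup ℂˣ :=
    { carrier := {u : ℂˣ | (u:ℂ) ∈ Ω}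
      mul_mem' := fun {a b} ha hb => hmulΩ _ ha _ hb
      one_mem' := by
        show ((1 : ℂˣ) : ℂ) ∈ Ω
        rw [Units.val_one]
        exact h1Ω
      inv_mem' := fun {u} hu => by
        have hn := hnormΩ _ hu
        have h2 : (u:ℂ) * (starRingEnd ℂ) (u:ℂ) = 1 := by
          rw [Complex.mul_conj, Complex.normSq_eq_norm_sq, hn]
          norm_num
        have h3 : ((u⁻¹ : ℂˣ) : ℂ) = (starRingEnd ℂ) (u:ℂ) := by
          rw [Units.val_inv_eq_inv_val]
          exact inv_eq_of_mul_eq_one_right h2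
        show ((u⁻¹ : ℂˣ) : ℂ) ∈ Ω
        rw [h3]
        exact hconjΩ _ hu } with hG'
  haveI hGfin : Finite ↥G' := by
    have hfin : {u : ℂˣ | (u:ℂ) ∈ Ω}.Finite :=
      hΩfin.preimage Units.val_injective.injOn
    exact hfin.to_subtype
  haveI hGne : Nonempty ↥G' := ⟨1, G'.one_mem⟩
  set k := Nat.card ↥G' with hk
  have hkpos : 0 < k := Nat.card_pos
  have hk1 : 1 ≤ k := hkpos
  haveI : NeZero k := ⟨hkpos.ne'⟩
  have hpowk : ∀ ω ∈ Ω, ω^k = 1 := by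
    intro ω hω
    set u : ℂˣ := Units.mk0 ω (hne0 ω hω) with hu
    have huG : u ∈ G' := by
      show (u:ℂ) ∈ Ω
      rw [hu, Units.val_mk0]
      exact hω
    have h2 : (⟨u, huG⟩ : ↥G')^k = 1 := pow_card_eq_one'
    have h3 : ((u:ℂˣ):ℂ)^k = 1 := by
      have h4 := congrArg (fun v : ↥G' => ((v : ℂˣ) : ℂ)) h2
      simpa using h4
    rw [hu, Units.val_mk0] at h3
    exact h3
  have hcardΩ : Ω.ncard = k := by
    rw [hk, ← Nat.card_coe_set_eq]
    refine (Nat.card_congr ?_).symm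
    exact
      { toFun := fun u => ⟨((u.1 : ℂˣ) : ℂ), u.2⟩
        invFun := fun ω => ⟨Units.mk0 ω.1 (hne0 ω.1 ω.2), by
          show ((Units.mk0 ω.1 (hne0 ω.1 ω.2) : ℂˣ) : ℂ) ∈ Ω
          rw [Units.val_mk0]
          exact ω.2⟩
        left_inv := fun u => Subtype.ext (Units.ext rfl)
        right_inv := fun ω => rfl }
  set ζ : ℂ := Complex.exp (2 * Real.pi * Complex.I / k) with hζ
  have hζprim : IsPrimitiveRoot ζ k := Complex.isPrimitiveRoot_exp k hkpos.ne'
  have hRfin : {z : ℂ | z^k = 1} = ↑(Polynomial.nthRootsFinset k (1:ℂ)) := by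
    ext z
    rw [Set.mem_setOf_eq, Finset.mem_coe, Polynomial.mem_nthRootsFinset hkpos (1:ℂ)]
  have hR : Ω = {z : ℂ | z^k = 1} := by
    apply Set.eq_of_subset_of_ncard_le
    · intro ω hω
      exact hpowk ω hω
    · rw [hRfin, Set.ncard_coe_finset, hζprim.card_nthRootsFinset, hcardΩ]
    · rw [hRfin]
      exact (Polynomial.nthRootsFinset k (1:ℂ)).finite_toSet
  have hroot : ∀ j : ℕ, rootU k j = ζ^j := by
    intro j
    rw [rootU, hζ, ← Complex.exp_nat_mul]
    congr 1
    push_cast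
    ring
  refine ⟨k, hk1, fun α => ?_⟩
  constructor
  · intro hα
    have hω : α / (lam:ℂ) ∈ Ω := (hmem_iff α).mp hα
    have h2 : (α/(lam:ℂ))^k = 1 := by
      rw [hR] at hω
      exact hω
    obtain ⟨j, hjk, hj⟩ := hζprim.eq_pow_of_pow_eq_one h2
    refine ⟨j, hjk, ?_⟩
    rw [hroot j, hj]
    field_simp
  · rintro ⟨j, hjk, rfl⟩
    have hζj : ζ^j ∈ Ω := by
      rw [hR]
      show (ζ^j)^k = 1
      rw [← pow_mul, mul_comm j k, pow_mul, hζprim.pow_eq_one, one_pow]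
    rw [hroot j]
    exact hζj

end

end QEM
end

section
/- Assume Hypothesis (HA). Then P maps C(M) into C(M), and the sequence of operators {λ^{-n} P^n : C(M) → C(M)}_{n∈ℕ} is bounded, i.e. sup_{n∈ℕ} ‖λ^{-n} P^n‖_{C(M)→C(M)} < ∞ (the operator λ^{-1}P is power-bounded on C(M) with the supremum norm). -/
open MeasureTheory ProbabilityTheory Filter Topology
open scoped ENNReal NNReal

namespace QEM

noncomputable section

variable {M : Type*} [MetricSpace M] [CompactSpace M] [MeasurableSpace M] [BorelSpace M]

section Aux
variable {M : Type*} [MeasurableSpace M]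

lemma ac_epsdelta {μ ν : Measure M} [IsFiniteMeasure ν] [IsFiniteMeasure μ]
    (h : ν ≪ μ) {ε : ℝ≥0∞} (hε : ε ≠ 0) :
    ∃ δ : ℝ≥0∞, 0 < δ ∧ ∀ A : Set M, MeasurableSet A → μ A < δ → ν A < ε := by
  haveI : ν.HaveLebesgueDecomposition μ :=
    MeasureTheory.Measure.haveLebesgueDecomposition_of_finiteMeasure
  have hne : ∫⁻ x, ν.rnDeriv μ x ∂μ ≠ ∞ := (Measure.lintegral_rnDeriv_lt_top ν μ).ne
  obtain ⟨δ, hδ, H⟩ := exists_pos_setLIntegral_lt_of_measure_lt hne hε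
  refine ⟨δ, hδ, fun A hA hAδ => ?_⟩
  have hνA : ν A = ∫⁻ x in A, ν.rnDeriv μ x ∂μ := by
    conv_lhs => rw [← Measure.withDensity_rnDeriv_eq ν μ h]
    rw [withDensity_apply _ hA]
  rw [hνA]; exact H A hAδ

/-- truncation to [0,1] -/
def trunc01 (t : ℝ) : ℝ := max 0 (min t 1)

lemma trunc01_nonneg (t : ℝ) : 0 ≤ trunc01 t := le_max_left _ _
lemma trunc01_le_one (t : ℝ) : trunc01 t ≤ 1 := max_le (by norm_num) (min_le_right _ _)
lemma trunc01_continuous : Continuous trunc01 :=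
  continuous_const.max ((continuous_id.min continuous_const))
lemma trunc01_eq {t : ℝ} (h0 : 0 ≤ t) (h1 : t ≤ 1) : trunc01 t = t := by
  unfold trunc01; rw [min_eq_left h1, max_eq_right h0]
lemma trunc01_lip (a b : ℝ) : |trunc01 a - trunc01 b| ≤ |a - b| := by
  unfold trunc01
  have h1 : |max 0 (min a 1) - max 0 (min b 1)| ≤ |min a 1 - min b 1| := by
    rw [max_comm 0 (min a 1), max_comm 0 (min b 1)]
    exact abs_max_sub_max_le_abs _ _ _
  refine h1.trans ?_
  refine (abs_min_sub_min_le_max a 1 b 1).trans ?_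
  simp

lemma integrable_trunc01 {ν : Measure M} [IsFiniteMeasure ν] {f : M → ℝ}
    (hf : StronglyMeasurable f) : Integrable (fun x => trunc01 (f x)) ν := by
  refine Integrable.mono' (integrable_const 1)
    (trunc01_continuous.comp_stronglyMeasurable hf).aestronglyMeasurable
    (Filter.Eventually.of_forall fun x => ?_)
  rw [Real.norm_eq_abs, abs_le]
  exact ⟨by linarith [trunc01_nonneg (f x)], trunc01_le_one (f x)⟩

/-- Key Vitali–Hahn–Saks style uniform absolute continuity lemma. -/
lemma vhs_uac {μ : Measure M} [IsFiniteMeasure μ] (ν : ℕ → Measure M) (νl : Measure M)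
    (hac : ∀ k, ν k ≪ μ) (hacl : νl ≪ μ)
    (hm : ∀ k, ν k Set.univ ≤ 1) (hml : νl Set.univ ≤ 1)
    (hconv : ∀ F : M → ℝ, Measurable F → (∀ x, 0 ≤ F x) → (∀ x, F x ≤ 1) →
      Tendsto (fun k => ∫ x, F x ∂(ν k)) atTop (𝓝 (∫ x, F x ∂νl)))
    {ε : ℝ} (hε : 0 < ε) :
    ∃ δ : ℝ≥0∞, 0 < δ ∧ ∃ K : ℕ, ∀ k, K ≤ k → ∀ A : Set M, MeasurableSet A →
      μ A < δ → (ν k A).toReal < ε := by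
  haveI hfin : ∀ k, IsFiniteMeasure (ν k) := fun k =>
    ⟨lt_of_le_of_lt (hm k) ENNReal.one_lt_top⟩
  haveI hfinl : IsFiniteMeasure νl := ⟨lt_of_le_of_lt hml ENNReal.one_lt_top⟩
  -- the dominating measure
  set μh : Measure M := μ + νl + Measure.sum (fun k => ((2:ℝ≥0∞)^k)⁻¹ • ν k) with hμh_def
  have h2k0 : ∀ k : ℕ, ((2:ℝ≥0∞)^k) ≠ 0 := fun k => (pow_ne_zero k (by norm_num))
  have h2kt : ∀ k : ℕ, ((2:ℝ≥0∞)^k) ≠ ∞ := fun k => (ENNReal.pow_ne_top (by norm_num))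
  have hsum_apply : ∀ (s : Set M), MeasurableSet s →
      Measure.sum (fun k => ((2:ℝ≥0∞)^k)⁻¹ • ν k) s = ∑' k, ((2:ℝ≥0∞)^k)⁻¹ * ν k s := by
    intro s hs
    rw [Measure.sum_apply _ hs]
    simp [Measure.smul_apply]
  haveI : IsFiniteMeasure μh := by
    constructor
    rw [hμh_def]
    simp only [Measure.add_apply]
    have h1 : Measure.sum (fun k => ((2:ℝ≥0∞)^k)⁻¹ • ν k) Set.univ ≤ 2 := by
      rw [hsum_apply _ MeasurableSet.univ]
      calc ∑' k, ((2:ℝ≥0∞)^k)⁻¹ * ν k Set.univ ≤ ∑' k : ℕ, ((2:ℝ≥0∞)⁻¹)^k := by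
            refine ENNReal.tsum_le_tsum fun k => ?_
            rw [← ENNReal.inv_pow]
            calc ((2:ℝ≥0∞)^k)⁻¹ * ν k Set.univ ≤ ((2:ℝ≥0∞)^k)⁻¹ * 1 := by
                  exact mul_le_mul_right (hm k) _
              _ = ((2:ℝ≥0∞)^k)⁻¹ := mul_one _
        _ = (1 - 2⁻¹)⁻¹ := ENNReal.tsum_geometric _
        _ = 2 := by norm_num
    calc μ Set.univ + νl Set.univ + Measure.sum (fun k => ((2:ℝ≥0∞)^k)⁻¹ • ν k) Set.univ
        ≤ μ Set.univ + 1 + 2 := add_le_add (add_le_add le_rfl hml) h1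
      _ < ∞ := by
          have := measure_lt_top μ Set.univ
          finiteness
  -- domination facts
  have hle : ∀ k, ν k ≤ ((2:ℝ≥0∞)^k) • μh := by
    intro k
    rw [Measure.le_iff']
    intro s
    have h1 : ((2:ℝ≥0∞)^k)⁻¹ • ν k ≤ μh := by
      refine le_trans (Measure.le_sum (fun k => ((2:ℝ≥0∞)^k)⁻¹ • ν k) k) ?_
      rw [hμh_def, Measure.le_iff']
      intro s
      simp only [Measure.add_apply]
      exact le_add_self
    have h2 : (((2:ℝ≥0∞)^k)⁻¹ • ν k) s ≤ μh s := h1 s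
    rw [Measure.smul_apply, smul_eq_mul] at h2
    calc ν k s = ((2:ℝ≥0∞)^k) * (((2:ℝ≥0∞)^k)⁻¹ * ν k s) := by
          rw [← mul_assoc, ENNReal.mul_inv_cancel (h2k0 k) (h2kt k), one_mul]
      _ ≤ ((2:ℝ≥0∞)^k) * μh s := mul_le_mul_right h2 _
      _ = (((2:ℝ≥0∞)^k) • μh) s := by rw [Measure.smul_apply, smul_eq_mul]
  have hach : ∀ k, ν k ≪ μh := fun k => Measure.absolutelyContinuous_of_le_smul (hle k)
  have hlel : νl ≤ μh := by
    rw [hμh_def, Measure.le_iff']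
    intro s
    simp only [Measure.add_apply]
    calc νl s ≤ μ s + νl s := le_add_self
      _ ≤ μ s + νl s + (Measure.sum (fun k => ((2:ℝ≥0∞)^k)⁻¹ • ν k)) s := le_self_add
  have hacl2 : νl ≪ μh := Measure.absolutelyContinuous_of_le hlel
  have hμhac : μh ≪ μ := by
    refine Measure.AbsolutelyContinuous.mk fun s hs h0 => ?_
    rw [hμh_def]
    simp only [Measure.add_apply]
    rw [hsum_apply s hs, hacl h0]
    have : ∀ k : ℕ, ((2:ℝ≥0∞)^k)⁻¹ * ν k s = 0 := fun k => by rw [hac k h0, mul_zero]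
    simp [h0, this]
  haveI : Fact ((1:ℝ≥0∞) ≤ 1) := ⟨le_rfl⟩
  set J : Measure M → Lp ℝ 1 μh → ℝ := fun ν' f => ∫ x, trunc01 (f x) ∂ν' with hJ_def
  have hJdiff : ∀ (ν' : Measure M) (c : ℝ≥0∞), c ≠ ∞ → ν' ≤ c • μh →
      ∀ f g : Lp ℝ 1 μh, |J ν' f - J ν' g| ≤ c.toReal * ‖f - g‖ := by
    intro ν' c hc hlec f g
    haveI : IsFiniteMeasure ν' := by
      constructor
      calc ν' Set.univ ≤ (c • μh) Set.univ := Measure.le_iff'.1 hlec Set.univ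
        _ = c * μh Set.univ := by rw [Measure.smul_apply, smul_eq_mul]
        _ < ∞ := ENNReal.mul_lt_top (lt_of_le_of_ne le_top hc) (measure_lt_top _ _)
    have hi1 : Integrable (fun x => trunc01 (f x)) ν' := integrable_trunc01 (Lp.stronglyMeasurable f)
    have hi2 : Integrable (fun x => trunc01 (g x)) ν' := integrable_trunc01 (Lp.stronglyMeasurable g)
    rw [hJ_def]
    simp only []
    rw [← integral_sub hi1 hi2, ← Real.norm_eq_abs]
    refine le_trans (norm_integral_le_lintegral_norm _) ?_
    have hmono1 : ∫⁻ x, ENNReal.ofReal ‖trunc01 (f x) - trunc01 (g x)‖ ∂ν'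
        ≤ ∫⁻ x, ENNReal.ofReal ‖f x - g x‖ ∂ν' :=
      lintegral_mono fun x => ENNReal.ofReal_le_ofReal
        (by rw [Real.norm_eq_abs, Real.norm_eq_abs]; exact trunc01_lip _ _)
    have hmono2 : ∫⁻ x, ENNReal.ofReal ‖f x - g x‖ ∂ν'
        ≤ c * ∫⁻ x, ENNReal.ofReal ‖f x - g x‖ ∂μh := by
      refine le_trans (lintegral_mono' hlec le_rfl) ?_
      rw [lintegral_smul_measure, smul_eq_mul]
    have heq : ∫⁻ x, ENNReal.ofReal ‖f x - g x‖ ∂μh = eLpNorm (⇑(f - g)) 1 μh := by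
      rw [eLpNorm_one_eq_lintegral_enorm]
      refine lintegral_congr_ae ?_
      filter_upwards [Lp.coeFn_sub f g] with x hx
      rw [hx, Pi.sub_apply, ofReal_norm_eq_enorm]
    have hfin2 : c * eLpNorm (⇑(f - g)) 1 μh ≠ ∞ :=
      ENNReal.mul_ne_top hc (Lp.eLpNorm_ne_top (f - g))
    refine le_trans (ENNReal.toReal_mono hfin2 ?_) ?_
    · exact le_trans hmono1 (by rw [← heq] at *; exact hmono2)
    · rw [ENNReal.toReal_mul, Lp.norm_def]
  have hJconv : ∀ f : Lp ℝ 1 μh, Tendsto (fun k => J (ν k) f) atTop (𝓝 (J νl f)) := fun f =>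
    hconv _ (trunc01_continuous.measurable.comp (Lp.stronglyMeasurable f).measurable)
      (fun x => trunc01_nonneg _) (fun x => trunc01_le_one _)
  have hJcont : ∀ k, Continuous (fun f : Lp ℝ 1 μh => J (ν k) f) := by
    intro k
    have hlip : LipschitzWith ((2:ℝ≥0)^k) (fun f : Lp ℝ 1 μh => J (ν k) f) := by
      refine lipschitzWith_iff_dist_le_mul.2 fun f g => ?_
      rw [Real.dist_eq, dist_eq_norm]
      have := hJdiff (ν k) ((2:ℝ≥0∞)^k) (h2kt k) (hle k) f g
      rw [ENNReal.toReal_pow] at this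
      have h2 : ((2:ℝ≥0∞)).toReal = 2 := by norm_num
      rw [h2] at this
      refine this.trans (le_of_eq ?_)
      push_cast
      ring
    exact hlip.continuous
  have hJcontl : Continuous (fun f : Lp ℝ 1 μh => J νl f) := by
    have hlip : LipschitzWith 1 (fun f : Lp ℝ 1 μh => J νl f) := by
      refine lipschitzWith_iff_dist_le_mul.2 fun f g => ?_
      rw [Real.dist_eq, dist_eq_norm]
      have := hJdiff νl 1 (by norm_num) (by rw [one_smul]; exact hlel) f g
      simpa using this
    exact hlip.continuous
  -- the order interval U in L¹(μh)
  set c1 : Lp ℝ 1 μh := indicatorConstLp 1 MeasurableSet.univ (measure_ne_top μh _) (1:ℝ)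
    with hc1_def
  have hc1 : ⇑c1 =ᵐ[μh] fun _ => (1:ℝ) := by
    filter_upwards [indicatorConstLp_coeFn (μ := μh) (p := 1) (hs := MeasurableSet.univ)
      (hμs := measure_ne_top μh _) (c := (1:ℝ))] with x hx
    rw [hc1_def, hx, Set.indicator_univ]
  have h0c1 : (0 : Lp ℝ 1 μh) ≤ c1 := by
    rw [← Lp.coeFn_nonneg]
    filter_upwards [hc1] with x hx
    rw [hx]; norm_num
  set U : Set (Lp ℝ 1 μh) := {f | 0 ≤ f ∧ f ≤ c1} with hU_def
  have hUclosed : IsClosed U := by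
    rw [hU_def, Set.setOf_and]
    exact (isClosed_le continuous_const continuous_id).inter
      (isClosed_le continuous_id continuous_const)
  haveI : CompleteSpace U := hUclosed.completeSpace_coe
  haveI : Nonempty U := ⟨⟨0, le_rfl, h0c1⟩⟩
  haveI : BaireSpace U := inferInstance
  set E : ℕ → Set U := fun m => {f | ∀ k, m ≤ k → |J (ν k) f.1 - J νl f.1| ≤ ε/4} with hE_def
  have hEclosed : ∀ m, IsClosed (E m) := by
    intro m
    have hrw : E m = ⋂ (k : ℕ), ⋂ (_ : m ≤ k), {f : U | |J (ν k) f.1 - J νl f.1| ≤ ε/4} := by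
      ext f; simp [hE_def, Set.mem_iInter]
    rw [hrw]
    refine isClosed_iInter fun k => isClosed_iInter fun hk => ?_
    have hcont : Continuous fun f : U => |J (ν k) f.1 - J νl f.1| :=
      (((hJcont k).comp continuous_subtype_val).sub (hJcontl.comp continuous_subtype_val)).abs
    exact IsClosed.preimage hcont isClosed_Iic
  have hEcover : ⋃ m, E m = Set.univ := by
    ext f
    simp only [Set.mem_iUnion, Set.mem_univ, iff_true]
    have ht := hJconv f.1
    rw [Metric.tendsto_atTop] at ht
    obtain ⟨K, hK⟩ := ht (ε/4) (by linarith)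
    refine ⟨K, fun k hk => le_of_lt ?_⟩
    have := hK k hk
    rwa [Real.dist_eq] at this
  obtain ⟨m₀, hm₀⟩ := nonempty_interior_of_iUnion_of_closed hEclosed hEcover
  obtain ⟨f₀u, hf₀u⟩ := hm₀
  rw [mem_interior_iff_mem_nhds, Metric.mem_nhds_iff] at hf₀u
  obtain ⟨r, hr, hball⟩ := hf₀u
  -- choose δ via single-measure absolute continuity
  obtain ⟨δ₁, hδ₁, H₁⟩ := ac_epsdelta hμhac (ε := ENNReal.ofReal (r/2))
    (by rw [Ne, ENNReal.ofReal_eq_zero, not_le]; linarith)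
  obtain ⟨δ₂, hδ₂, H₂⟩ := ac_epsdelta hacl (ε := ENNReal.ofReal (ε/4))
    (by rw [Ne, ENNReal.ofReal_eq_zero, not_le]; linarith)
  refine ⟨min δ₁ δ₂, lt_min hδ₁ hδ₂, m₀, fun k hk A hA hAδ => ?_⟩
  have hμhA : μh A < ENNReal.ofReal (r/2) := H₁ A hA (lt_of_lt_of_le hAδ (min_le_left _ _))
  have hνlA : νl A < ENNReal.ofReal (ε/4) := H₂ A hA (lt_of_lt_of_le hAδ (min_le_right _ _))
  -- the indicator element and the two clipped perturbations of the Baire center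
  set e : Lp ℝ 1 μh := indicatorConstLp 1 hA (measure_ne_top μh A) (1:ℝ) with he_def
  have he_coe : ⇑e =ᵐ[μh] A.indicator (fun _ => (1:ℝ)) := indicatorConstLp_coeFn
  have he_nonneg : (0 : Lp ℝ 1 μh) ≤ e := by
    rw [← Lp.coeFn_nonneg]
    filter_upwards [he_coe] with x hx
    rw [hx]
    exact Set.indicator_nonneg (fun _ _ => zero_le_one) x
  have he_norm_lt : ‖e‖ < r/2 := by
    have : ‖e‖ = (μh A).toReal := by
      rw [he_def, norm_indicatorConstLp one_ne_zero ENNReal.one_ne_top]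
      simp
      rfl
    rw [this]
    exact (ENNReal.lt_ofReal_iff_toReal_lt (measure_ne_top μh A)).1 hμhA
  have hf₀0 : (0 : Lp ℝ 1 μh) ≤ f₀u.1 := f₀u.2.1
  have hf₀c : f₀u.1 ≤ c1 := f₀u.2.2
  set f₁ : Lp ℝ 1 μh := (f₀u.1 + e) ⊓ c1 with hf₁_def
  set f₂ : Lp ℝ 1 μh := (f₀u.1 - e) ⊔ 0 with hf₂_def
  have hf₁U : f₁ ∈ U :=
    ⟨le_inf (le_trans hf₀0 (le_add_of_nonneg_right he_nonneg)) h0c1, inf_le_right⟩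
  have hf₂U : f₂ ∈ U := ⟨le_sup_right, sup_le (le_trans (sub_le_self _ he_nonneg) hf₀c) h0c1⟩
  have hf₁ge : f₀u.1 ≤ f₁ := le_inf (le_add_of_nonneg_right he_nonneg) hf₀c
  have hf₁le : f₁ ≤ f₀u.1 + e := inf_le_left
  have hf₂le : f₂ ≤ f₀u.1 := sup_le (sub_le_self _ he_nonneg) hf₀0
  have hf₂ge : f₀u.1 - e ≤ f₂ := le_sup_left
  have hd₁ : ‖f₁ - f₀u.1‖ ≤ ‖e‖ := by
    refine norm_le_norm_of_abs_le_abs ?_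
    rw [abs_of_nonneg (sub_nonneg.2 hf₁ge)]
    exact le_trans (sub_le_iff_le_add'.2 hf₁le) (le_abs_self e)
  have hd₂ : ‖f₂ - f₀u.1‖ ≤ ‖e‖ := by
    refine norm_le_norm_of_abs_le_abs ?_
    rw [abs_sub_comm, abs_of_nonneg (sub_nonneg.2 hf₂le)]
    exact le_trans (sub_le_comm.1 hf₂ge) (le_abs_self e)
  have hball1 : (⟨f₁, hf₁U⟩ : U) ∈ E m₀ := by
    apply hball
    rw [Metric.mem_ball, Subtype.dist_eq, dist_eq_norm]
    calc ‖f₁ - f₀u.1‖ ≤ ‖e‖ := hd₁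
      _ < r/2 := he_norm_lt
      _ < r := by linarith
  have hball2 : (⟨f₂, hf₂U⟩ : U) ∈ E m₀ := by
    apply hball
    rw [Metric.mem_ball, Subtype.dist_eq, dist_eq_norm]
    calc ‖f₂ - f₀u.1‖ ≤ ‖e‖ := hd₂
      _ < r/2 := he_norm_lt
      _ < r := by linarith
  -- the key identity : J ν' f₁ - J ν' f₂ = ν' A
  have hkey : ∀ (ν' : Measure M), IsFiniteMeasure ν' → ν' ≪ μh →
      J ν' f₁ - J ν' f₂ = (ν' A).toReal := by
    intro ν' hfin' hac'
    haveI := hfin'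
    have hae : (fun x => trunc01 (f₁ x) - trunc01 (f₂ x)) =ᵐ[μh]
        A.indicator (fun _ => (1:ℝ)) := by
      have hf₀mem1 : (0 : M → ℝ) ≤ᵐ[μh] ⇑f₀u.1 := (Lp.coeFn_nonneg _).2 hf₀0
      have hf₀mem2 : ⇑f₀u.1 ≤ᵐ[μh] ⇑c1 := (Lp.coeFn_le _ _).2 hf₀c
      filter_upwards [Lp.coeFn_inf (f₀u.1 + e) c1, Lp.coeFn_sup (f₀u.1 - e) (0 : Lp ℝ 1 μh),
        Lp.coeFn_add f₀u.1 e, Lp.coeFn_sub f₀u.1 e, hc1, he_coe, hf₀mem1, hf₀mem2,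
        Lp.coeFn_zero ℝ 1 μh] with x h1 h2 h3 h4 h5 h6 h7 h8 h9
      have hx0 : 0 ≤ f₀u.1 x := by simpa using h7
      have hx1 : f₀u.1 x ≤ 1 := by
        have := h8; rw [h5] at this; exact this
      have hf₁x : f₁ x = min (f₀u.1 x + e x) 1 := by
        rw [← hf₁_def] at h1
        rw [h1, Pi.inf_apply, h3, Pi.add_apply, h5]
      have hf₂x : f₂ x = max (f₀u.1 x - e x) 0 := by
        rw [← hf₂_def] at h2
        rw [h2, Pi.sup_apply, h4, Pi.sub_apply, h9, Pi.zero_apply]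
      by_cases hx : x ∈ A
      · have hex : e x = 1 := by rw [h6, Set.indicator_of_mem hx]
        rw [hf₁x, hf₂x, hex, Set.indicator_of_mem hx]
        have hmin : min (f₀u.1 x + 1) 1 = 1 := min_eq_right (by linarith)
        have hmax : max (f₀u.1 x - 1) 0 = 0 := max_eq_right (by linarith)
        rw [hmin, hmax, trunc01_eq zero_le_one le_rfl, trunc01_eq le_rfl zero_le_one]
        norm_num
      · have hex : e x = 0 := by rw [h6, Set.indicator_of_notMem hx]
        rw [hf₁x, hf₂x, hex, Set.indicator_of_notMem hx]
        have hmin : min (f₀u.1 x + 0) 1 = f₀u.1 x := by rw [add_zero]; exact min_eq_left hx1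
        have hmax : max (f₀u.1 x - 0) 0 = f₀u.1 x := by rw [sub_zero]; exact max_eq_left hx0
        rw [hmin, hmax, trunc01_eq hx0 hx1]
        ring
    have hae' : (fun x => trunc01 (f₁ x) - trunc01 (f₂ x)) =ᵐ[ν'] A.indicator (fun _ => (1:ℝ)) :=
      hac'.ae_le hae
    have hi1 : Integrable (fun x => trunc01 (f₁ x)) ν' :=
      integrable_trunc01 (Lp.stronglyMeasurable f₁)
    have hi2 : Integrable (fun x => trunc01 (f₂ x)) ν' :=
      integrable_trunc01 (Lp.stronglyMeasurable f₂)
    rw [hJ_def]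
    simp only []
    rw [← integral_sub hi1 hi2, integral_congr_ae hae']
    exact integral_indicator_one (μ := ν') hA
  haveI := hfin k
  have hJ1 : |J (ν k) f₁ - J νl f₁| ≤ ε/4 := hball1 k hk
  have hJ2 : |J (ν k) f₂ - J νl f₂| ≤ ε/4 := hball2 k hk
  have hkey_k : J (ν k) f₁ - J (ν k) f₂ = (ν k A).toReal := hkey (ν k) (hfin k) (hach k)
  have hkey_l : J νl f₁ - J νl f₂ = (νl A).toReal := hkey νl hfinl hacl2
  have hνlA' : (νl A).toReal < ε/4 :=
    (ENNReal.lt_ofReal_iff_toReal_lt (measure_ne_top νl A)).1 hνlA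
  have h1 := abs_le.1 hJ1
  have h2 := abs_le.1 hJ2
  rw [← hkey_k]
  linarith [hkey_l]
end Aux

lemma bdd_of_cont {f : M → ℝ} (hf : Continuous f) : ∃ C, ∀ x, |f x| ≤ C := by
  obtain ⟨C, hC⟩ := (isCompact_range hf.abs).bddAbove
  exact ⟨C, fun x => hC (Set.mem_range_self x)⟩

lemma kernel_uac {μ : Measure M} [IsProbabilityMeasure μ] (κ : Kernel M M) (φ : M → ℝ)
    (hφ : Continuous φ)
    (hSF : ∀ f : M → ℝ, BddMeas f → Continuous (PR φ κ f))
    (hsub : ∀ x, κ x Set.univ ≤ 1) (hac : ∀ x, κ x ≪ μ)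
    {ε : ℝ} (hε : 0 < ε) :
    ∃ δ : ℝ≥0∞, 0 < δ ∧ ∀ (x : M) (A : Set M), MeasurableSet A → μ A < δ →
      (κ x A).toReal < ε := by
  by_contra hcon
  push_neg at hcon
  have hsel : ∀ k : ℕ, ∃ x A, MeasurableSet A ∧ μ A < ((k:ℝ≥0∞)+1)⁻¹ ∧ ε ≤ (κ x A).toReal := by
    intro k
    refine hcon _ (ENNReal.inv_pos.2 ?_)
    finiteness
  choose x A hmeas hsmall hbig using hsel
  obtain ⟨xl, -, σ, hσ, hσtend⟩ :=
    IsCompact.tendsto_subseq (x := x) isCompact_univ (fun n => Set.mem_univ _)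
  have hconv : ∀ F : M → ℝ, Measurable F → (∀ y, 0 ≤ F y) → (∀ y, F y ≤ 1) →
      Tendsto (fun k => ∫ z, F z ∂(κ (x (σ k)))) atTop (𝓝 (∫ z, F z ∂(κ xl))) := by
    intro F hFm hF0 hF1
    have hbdd : BddMeas F := ⟨hFm, 1, fun y => abs_le.2 ⟨by linarith [hF0 y], hF1 y⟩⟩
    have hPRcont := hSF F hbdd
    have hGcont : Continuous (fun y => Real.exp (-φ y) * PR φ κ F y) :=
      (Real.continuous_exp.comp hφ.neg).mul hPRcont
    have hEq : ∀ y, Real.exp (-φ y) * PR φ κ F y = ∫ z, F z ∂(κ y) := by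
      intro y
      show Real.exp (-φ y) * (Real.exp (φ y) * ∫ z, F z ∂(κ y)) = _
      rw [← mul_assoc, ← Real.exp_add, neg_add_cancel, Real.exp_zero, one_mul]
    have ht := (hGcont.tendsto xl).comp hσtend
    simp only [Function.comp_def] at ht
    rw [hEq xl] at ht
    exact ht.congr fun k => hEq (x (σ k))
  obtain ⟨δ, hδ, K, H⟩ := vhs_uac (fun k => κ (x (σ k))) (κ xl)
    (fun k => hac _) (hac _) (fun k => hsub _) (hsub _) hconv hε
  obtain ⟨n, hn⟩ := ENNReal.exists_inv_nat_lt hδ.ne'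
  have hKk : K ≤ max K n := le_max_left _ _
  have hcontr := H (max K n) hKk (A (σ (max K n))) (hmeas _)
  refine absurd (hcontr ?_) (not_lt.2 (hbig (σ (max K n))))
  refine lt_of_lt_of_le (hsmall (σ (max K n))) (le_trans ?_ hn.le)
  refine ENNReal.inv_le_inv.2 ?_
  have h1 : n ≤ max K n := le_max_right _ _
  have h2 : max K n ≤ σ (max K n) := hσ.le_apply
  have h3 : (n:ℝ≥0∞) ≤ ((σ (max K n) : ℕ) : ℝ≥0∞) := by exact_mod_cast le_trans h1 h2
  exact le_trans h3 le_self_add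

/-- **Lemma A.4.** Under Hypothesis (HA), `P` maps `C(M)` into `C(M)` and
`lam⁻¹ P` is power-bounded on `C(M)` with the supremum norm: there is `C` with
`‖P^n f‖_∞ ≤ C lam^n ‖f‖_∞` for all `n` and all continuous `f`. -/
theorem statement4 (μ : Measure M) (κ : Kernel M M) (φ : M → ℝ)
    (T : Lp ℂ ⊤ μ →L[ℂ] Lp ℂ ⊤ μ) (lam : ℝ) (g : M → ℝ)
    (hHA : HypHA μ κ φ T lam g) :
    (∀ f : M → ℝ, Continuous f → Continuous (PR φ κ f)) ∧
    ∃ C : ℝ, ∀ (n : ℕ) (f : M → ℝ), Continuous f → ∀ x : M,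
      |(PR φ κ)^[n] f x| ≤ C * lam ^ n * ⨆ y, |f y| := by
  have hset := hHA.setup
  haveI hprob : IsProbabilityMeasure μ := hset.prob
  haveI hNM : Nonempty M := by
    by_contra hne
    rw [not_nonempty_iff] at hne
    have h1 : μ Set.univ = 1 := measure_univ
    rw [Set.univ_eq_empty_iff.2 hne] at h1
    rw [measure_empty] at h1
    exact zero_ne_one h1
  have hcont_of_bdd : ∀ f : M → ℝ, Continuous f → BddMeas f := fun f hf =>
    ⟨hf.measurable, bdd_of_cont hf⟩
  have part1 : ∀ f : M → ℝ, Continuous f → Continuous (PR φ κ f) := fun f hf =>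
    hHA.strongFeller f (hcont_of_bdd f hf)
  refine ⟨part1, ?_⟩
  -- constants
  obtain ⟨Φ, hΦ⟩ := bdd_of_cont hset.contφ
  have hφΦ : ∀ x, φ x ≤ Φ := fun x => le_trans (le_abs_self _) (hΦ x)
  have hlam := hHA.lam_pos
  have hexpΦ : (0:ℝ) < Real.exp Φ := Real.exp_pos _
  set ε₀ : ℝ := lam / (2 * Real.exp Φ) with hε₀
  have hε₀pos : 0 < ε₀ := by positivity
  obtain ⟨δ, hδpos, hδ⟩ := kernel_uac κ φ hset.contφ hHA.strongFeller hset.subMarkov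
    hset.ac hε₀pos
  haveI hκfin : ∀ x, IsFiniteMeasure (κ x) := fun x =>
    ⟨lt_of_le_of_lt (hset.subMarkov x) ENNReal.one_lt_top⟩
  have hint_bdd : ∀ (ν : Measure M), IsFiniteMeasure ν → ∀ (v : M → ℝ), Measurable v →
      (∃ C, ∀ x, |v x| ≤ C) → Integrable v ν := by
    intro ν hν v hm hCv
    obtain ⟨C, hC⟩ := hCv
    haveI := hν
    exact Integrable.mono' (integrable_const C) hm.aestronglyMeasurable
      (Filter.Eventually.of_forall fun x => by rw [Real.norm_eq_abs]; exact hC x)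
  -- iterates of the constant function 1
  set h : ℕ → M → ℝ := fun n => (PR φ κ)^[n] (fun _ => (1:ℝ)) with hh
  have hsucc : ∀ n, h (n+1) = PR φ κ (h n) := fun n =>
    Function.iterate_succ_apply' (PR φ κ) n _
  have hbasic : ∀ n, Continuous (h n) ∧ ∀ x, 0 ≤ h n x := by
    intro n
    induction n with
    | zero => exact ⟨continuous_const, fun _ => zero_le_one⟩
    | succ n ih =>
      refine ⟨by rw [hsucc]; exact part1 _ ih.1, fun x => ?_⟩
      rw [hsucc]
      have h1 : 0 ≤ ∫ y, h n y ∂(κ x) := integral_nonneg ih.2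
      exact mul_nonneg (Real.exp_pos _).le h1
  have hcont : ∀ n, Continuous (h n) := fun n => (hbasic n).1
  have hpos : ∀ n x, 0 ≤ h n x := fun n => (hbasic n).2
  have hBdd : ∀ n, BddMeas (h n) := fun n => ⟨(hcont n).measurable, bdd_of_cont (hcont n)⟩
  have hint : ∀ n, ∫ x, h n x ∂μ = lam ^ n := by
    intro n
    induction n with
    | zero =>
      rw [pow_zero]
      have h0 : h 0 = fun _ => (1:ℝ) := rfl
      rw [h0]
      simp
    | succ n ih =>
      rw [hsucc, hHA.Pstar (h n) (hBdd n), ih, pow_succ]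
      ring
  -- suprema
  set S : ℕ → ℝ := fun n => ⨆ x, h n x with hS
  have hbddA : ∀ n, BddAbove (Set.range (h n)) := fun n => (isCompact_range (hcont n)).bddAbove
  have hle_S : ∀ n x, h n x ≤ S n := fun n x => le_ciSup (hbddA n) x
  have hS0 : S 0 = 1 := by
    have h0 : ∀ x, h 0 x = 1 := fun _ => rfl
    calc S 0 = ⨆ x, h 0 x := rfl
      _ = ⨆ _ : M, (1:ℝ) := by simp only [h0]
      _ = 1 := ciSup_const
  have hSnn : ∀ n, 0 ≤ S n := fun n =>
    le_trans (hpos n (Classical.arbitrary M)) (hle_S n _)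
  -- threshold constant
  set d : ℝ≥0∞ := min δ 1 with hd
  have hdpos : 0 < d := lt_min hδpos (by norm_num)
  have hdne : d ≠ ∞ := by
    have : d ≤ 1 := min_le_right _ _
    exact (lt_of_le_of_lt this ENNReal.one_lt_top).ne
  have hdr : 0 < d.toReal := ENNReal.toReal_pos hdpos.ne' hdne
  set c : ℝ := 2 / d.toReal with hc
  have hcpos : 0 < c := by positivity
  -- the one-step recursion
  have hstep : ∀ n, S (n+1) ≤ lam / 2 * S n + Real.exp Φ * c * lam ^ n := by
    intro n
    have hlamn : 0 < lam ^ n := pow_pos hlam n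
    set A : Set M := {x | c * lam ^ n ≤ h n x} with hA
    have hAmeas : MeasurableSet A := measurableSet_le measurable_const (hcont n).measurable
    have hμA : μ A < δ := by
      have hmark := mul_meas_ge_le_integral_of_nonneg
        (Filter.Eventually.of_forall (hpos n))
        (hint_bdd μ inferInstance (h n) (hcont n).measurable (bdd_of_cont (hcont n)))
        (c * lam ^ n)
      rw [hint n] at hmark
      have h1 : (μ A).toReal ≤ d.toReal / 2 := by
        have h2 : (μ A).toReal ≤ lam ^ n / (c * lam ^ n) := by
          rw [le_div_iff₀ (by positivity)]
          rw [mul_comm]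
          exact hmark
        have h3 : lam ^ n / (c * lam ^ n) = d.toReal / 2 := by
          rw [hc]
          field_simp
        rw [h3] at h2
        exact h2
      have h4 : μ A ≤ ENNReal.ofReal (d.toReal / 2) := by
        rw [← ENNReal.ofReal_toReal (measure_ne_top μ A)]
        exact ENNReal.ofReal_le_ofReal h1
      have h5 : ENNReal.ofReal (d.toReal / 2) < d := by
        conv_rhs => rw [← ENNReal.ofReal_toReal hdne]
        rw [ENNReal.ofReal_lt_ofReal_iff hdr]
        linarith
      calc μ A ≤ ENNReal.ofReal (d.toReal / 2) := h4
        _ < d := h5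
        _ ≤ δ := min_le_left _ _
    have hbound : ∀ x, h (n+1) x ≤ Real.exp Φ * (ε₀ * S n + c * lam ^ n) := by
      intro x
      rw [hsucc]
      show Real.exp (φ x) * ∫ y, h n y ∂(κ x) ≤ _
      haveI := hκfin x
      have hintg : Integrable (h n) (κ x) :=
        hint_bdd _ inferInstance _ (hcont n).measurable (bdd_of_cont (hcont n))
      have hsplit : ∫ y, h n y ∂(κ x)
          = (∫ y in A, h n y ∂(κ x)) + ∫ y in Aᶜ, h n y ∂(κ x) :=
        (integral_add_compl hAmeas hintg).symm
      have hA1 : ∫ y in A, h n y ∂(κ x) ≤ S n * ε₀ := by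
        have hb := norm_setIntegral_le_of_norm_le_const (μ := κ x) (s := A) (f := h n)
          (C := S n) (measure_lt_top _ _)
          (fun y _ => by rw [Real.norm_eq_abs, abs_of_nonneg (hpos n y)]; exact hle_S n y)
        rw [Real.norm_eq_abs] at hb
        have hδx := hδ x A hAmeas hμA
        calc ∫ y in A, h n y ∂(κ x) ≤ |∫ y in A, h n y ∂(κ x)| := le_abs_self _
          _ ≤ S n * (κ x A).toReal := hb
          _ ≤ S n * ε₀ := mul_le_mul_of_nonneg_left hδx.le (hSnn n)
      have hA2 : ∫ y in Aᶜ, h n y ∂(κ x) ≤ c * lam ^ n := by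
        have hb := norm_setIntegral_le_of_norm_le_const (μ := κ x) (s := Aᶜ) (f := h n)
          (C := c * lam ^ n) (measure_lt_top _ _)
          (fun y hy => by
            rw [Real.norm_eq_abs, abs_of_nonneg (hpos n y)]
            exact le_of_lt (lt_of_not_ge hy))
        rw [Real.norm_eq_abs] at hb
        have hκc : (κ x Aᶜ).toReal ≤ 1 := by
          have h1 : κ x Aᶜ ≤ 1 := le_trans (measure_mono (Set.subset_univ _)) (hset.subMarkov x)
          calc (κ x Aᶜ).toReal ≤ (1:ℝ≥0∞).toReal := ENNReal.toReal_mono (by norm_num) h1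
            _ = 1 := by norm_num
        calc ∫ y in Aᶜ, h n y ∂(κ x) ≤ |∫ y in Aᶜ, h n y ∂(κ x)| := le_abs_self _
          _ ≤ (c * lam ^ n) * (κ x Aᶜ).toReal := hb
          _ ≤ (c * lam ^ n) * 1 := mul_le_mul_of_nonneg_left hκc (by positivity)
          _ = c * lam ^ n := mul_one _
      calc Real.exp (φ x) * ∫ y, h n y ∂(κ x)
          ≤ Real.exp Φ * ∫ y, h n y ∂(κ x) :=
            mul_le_mul_of_nonneg_right (Real.exp_le_exp.2 (hφΦ x)) (integral_nonneg (hpos n))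
        _ ≤ Real.exp Φ * (S n * ε₀ + c * lam ^ n) := by
            refine mul_le_mul_of_nonneg_left ?_ hexpΦ.le
            rw [hsplit]
            exact add_le_add hA1 hA2
        _ = Real.exp Φ * (ε₀ * S n + c * lam ^ n) := by ring
    have hkeyc : Real.exp Φ * ε₀ = lam / 2 := by
      rw [hε₀]
      field_simp
    refine ciSup_le fun x => ?_
    calc h (n+1) x ≤ Real.exp Φ * (ε₀ * S n + c * lam ^ n) := hbound x
      _ = (Real.exp Φ * ε₀) * S n + Real.exp Φ * c * lam ^ n := by ring
      _ = lam / 2 * S n + Real.exp Φ * c * lam ^ n := by rw [hkeyc]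
  -- global geometric bound on S
  set C0 : ℝ := max 1 (2 * (Real.exp Φ * c) / lam) with hC0
  have hC0_1 : (1:ℝ) ≤ C0 := le_max_left _ _
  have hC0_2 : 2 * (Real.exp Φ * c) / lam ≤ C0 := le_max_right _ _
  have hC0lam : Real.exp Φ * c ≤ lam * C0 / 2 := by
    rw [div_le_iff₀ hlam] at hC0_2
    linarith
  have hSbound : ∀ n, S n ≤ C0 * lam ^ n := by
    intro n
    induction n with
    | zero => rw [pow_zero, mul_one, hS0]; exact hC0_1
    | succ n ih =>
      have h1 := hstep n
      have hlamn : 0 < lam ^ n := pow_pos hlam n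
      have h2 : lam / 2 * S n ≤ lam / 2 * (C0 * lam ^ n) :=
        mul_le_mul_of_nonneg_left ih (by positivity)
      have h3 : Real.exp Φ * c * lam ^ n ≤ (lam * C0 / 2) * lam ^ n :=
        mul_le_mul_of_nonneg_right hC0lam hlamn.le
      rw [pow_succ]
      calc S (n+1) ≤ lam / 2 * S n + Real.exp Φ * c * lam ^ n := h1
        _ ≤ lam / 2 * (C0 * lam ^ n) + (lam * C0 / 2) * lam ^ n := add_le_add h2 h3
        _ = C0 * (lam ^ n * lam) := by ring
  -- pointwise domination by the iterates of 1
  have hdom : ∀ (f : M → ℝ), Continuous f → ∀ n x,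
      |(PR φ κ)^[n] f x| ≤ (⨆ y, |f y|) * h n x := by
    intro f hf
    have hSf_bdd : BddAbove (Set.range fun y => |f y|) := (isCompact_range hf.abs).bddAbove
    have hSf : ∀ x, |f x| ≤ ⨆ y, |f y| := fun x => le_ciSup hSf_bdd x
    have hSfnn : 0 ≤ ⨆ y, |f y| := le_trans (abs_nonneg _) (hSf (Classical.arbitrary M))
    have hitcont : ∀ n, Continuous ((PR φ κ)^[n] f) := by
      intro n
      induction n with
      | zero => exact hf
      | succ n ih => rw [Function.iterate_succ_apply']; exact part1 _ ih
    intro n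
    induction n with
    | zero =>
      intro x
      have h0 : h 0 x = 1 := rfl
      rw [h0, mul_one]
      exact hSf x
    | succ n ih =>
      intro x
      rw [Function.iterate_succ_apply', hsucc]
      show |Real.exp (φ x) * ∫ y, (PR φ κ)^[n] f y ∂(κ x)|
        ≤ (⨆ y, |f y|) * (Real.exp (φ x) * ∫ y, h n y ∂(κ x))
      haveI := hκfin x
      have hi1 : Integrable ((PR φ κ)^[n] f) (κ x) :=
        hint_bdd _ inferInstance _ (hitcont n).measurable (bdd_of_cont (hitcont n))
      have hi2 : Integrable (fun y => (⨆ y, |f y|) * h n y) (κ x) :=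
        (hint_bdd _ inferInstance _ (hcont n).measurable (bdd_of_cont (hcont n))).const_mul _
      have hstep2 : |∫ y, (PR φ κ)^[n] f y ∂(κ x)| ≤ ∫ y, (⨆ y, |f y|) * h n y ∂(κ x) := by
        have habs : |∫ y, (PR φ κ)^[n] f y ∂(κ x)| ≤ ∫ y, |(PR φ κ)^[n] f y| ∂(κ x) := by
          rw [← Real.norm_eq_abs]
          refine le_trans (norm_integral_le_integral_norm _) (le_of_eq ?_)
          simp [Real.norm_eq_abs]
        exact le_trans habs (integral_mono hi1.abs hi2 (fun y => ih y))
      rw [abs_mul, abs_of_pos (Real.exp_pos _)]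
      calc Real.exp (φ x) * |∫ y, (PR φ κ)^[n] f y ∂(κ x)|
          ≤ Real.exp (φ x) * ∫ y, (⨆ y, |f y|) * h n y ∂(κ x) :=
            mul_le_mul_of_nonneg_left hstep2 (Real.exp_pos _).le
        _ = (⨆ y, |f y|) * (Real.exp (φ x) * ∫ y, h n y ∂(κ x)) := by
            rw [integral_const_mul]
            ring
  -- conclusion
  refine ⟨C0, fun n f hf x => ?_⟩
  have h1 := hdom f hf n x
  have h2 : h n x ≤ C0 * lam ^ n := le_trans (hle_S n x) (hSbound n)
  have hSf_bdd : BddAbove (Set.range fun y => |f y|) := (isCompact_range hf.abs).bddAbove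
  have hSfnn : 0 ≤ ⨆ y, |f y| :=
    le_trans (abs_nonneg _) (le_ciSup hSf_bdd (Classical.arbitrary M))
  calc |(PR φ κ)^[n] f x| ≤ (⨆ y, |f y|) * h n x := h1
    _ ≤ (⨆ y, |f y|) * (C0 * lam ^ n) := mul_le_mul_of_nonneg_left h2 hSfnn
    _ = C0 * lam ^ n * ⨆ y, |f y| := by ring

end

end QEM
end
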